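/- arXiv:1511.01153 — 4 statements merged into one kernel-verified Lean document; each statement's English description precedes it below -/
import Mathlib

section
/- Let (E, ‖·‖) be a complete L^∞-normed module (complete with respect to the norm ‖·‖_∞ given by the essential supremum of ‖·‖), and let (E_0, ‖·‖_0) be its L^0-extension random normed module. Then every x ∈ E_0 can be written as x = Σ_{k} Ĩ_{A_k} y_k for some sequence {y_k} in E and countable measurable partition {A_k} of Ω; that is, E_0 = H^0_cc(E). -/
open MeasureTheory Filter
noncomputable section

variable {Ω : Type} [MeasurableSpace Ω] {μ : Measure Ω}

/-- `L⁰(𝓕)`: equivalence classes of random variables, as a commutative ring. -/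
instance : NatCast (Ω →ₘ[μ] ℝ) := ⟨fun n => AEEqFun.const Ω (n : ℝ)⟩
instance : IntCast (Ω →ₘ[μ] ℝ) := ⟨fun n => AEEqFun.const Ω (n : ℝ)⟩
instance : CommRing (Ω →ₘ[μ] ℝ) :=
  AEEqFun.toGerm_injective.commRing AEEqFun.toGerm AEEqFun.zero_toGerm AEEqFun.one_toGerm
    AEEqFun.add_toGerm AEEqFun.mul_toGerm AEEqFun.neg_toGerm AEEqFun.sub_toGerm
    (fun _ _ => AEEqFun.smul_toGerm _ _) (fun _ _ => AEEqFun.smul_toGerm _ _)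
    AEEqFun.pow_toGerm (fun _ => rfl) (fun _ => rfl)

/-- `L^∞(𝓕)`: the subring of essentially bounded random variables. -/
def Linf (μ : Measure Ω) : Subring (Ω →ₘ[μ] ℝ) where
  carrier := {ξ | ∃ c : ℝ, ∀ᵐ ω ∂μ, |ξ ω| ≤ c}
  zero_mem' := ⟨0, by filter_upwards [AEEqFun.coeFn_zero (β := ℝ) (μ := μ)] with ω h; simp [h]⟩
  one_mem' := ⟨1, by filter_upwards [AEEqFun.coeFn_one (β := ℝ) (μ := μ)] with ω h; simp [h]⟩
  add_mem' := by
    rintro a b ⟨c, hc⟩ ⟨d, hd⟩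
    exact ⟨c + d, by
      filter_upwards [AEEqFun.coeFn_add a b, hc, hd] with ω h1 h2 h3
      calc |(a + b) ω| = |a ω + b ω| := by rw [h1]; rfl
        _ ≤ |a ω| + |b ω| := abs_add_le _ _
        _ ≤ c + d := add_le_add h2 h3⟩
  mul_mem' := by
    rintro a b ⟨c, hc⟩ ⟨d, hd⟩
    exact ⟨|c| * |d|, by
      filter_upwards [AEEqFun.coeFn_mul a b, hc, hd] with ω h1 h2 h3
      calc |(a * b) ω| = |a ω * b ω| := by rw [h1]; rfl
        _ = |a ω| * |b ω| := abs_mul _ _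
        _ ≤ |c| * |d| :=
            mul_le_mul (h2.trans (le_abs_self c)) (h3.trans (le_abs_self d))
              (abs_nonneg _) (abs_nonneg _)⟩
  neg_mem' := by
    rintro a ⟨c, hc⟩
    exact ⟨c, by
      filter_upwards [AEEqFun.coeFn_neg a, hc] with ω h1 h2
      calc |(-a) ω| = |-(a ω)| := by rw [h1]; rfl
        _ = |a ω| := abs_neg _
        _ ≤ c := h2⟩

/-- the constant `c`, as an element of `L^∞`. -/
def LinfConst (μ : Measure Ω) (c : ℝ) : Linf μ :=
  ⟨AEEqFun.const Ω c, |c|, by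
    filter_upwards [AEEqFun.coeFn_const (α := Ω) (μ := μ) c] with ω h
    simp [h, Function.const]⟩

/-- the equivalence class `Ĩ_A` of the indicator function of a set `A`. -/
def indL0 (μ : Measure Ω) (A : Set Ω) (hA : MeasurableSet A) : Ω →ₘ[μ] ℝ :=
  AEEqFun.mk (A.indicator (1 : Ω → ℝ)) ((measurable_const.indicator hA).aestronglyMeasurable)

/-- a countable measurable partition of `Ω`. -/
structure MPartition (Ω : Type) [MeasurableSpace Ω] where
  A : ℕ → Set Ω
  meas : ∀ k, MeasurableSet (A k)
  disj : ∀ m k, m ≠ k → A m ∩ A k = ∅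
  cover : (⋃ k, A k) = Set.univ

/-- `Ĩ_{A_k}` for a member of a countable measurable partition. -/
def MPartition.ind (P : MPartition Ω) (μ : Measure Ω) (k : ℕ) : Ω →ₘ[μ] ℝ :=
  indL0 μ (P.A k) (P.meas k)

/-- `‖·‖` is an `L⁰`-norm making the `L⁰`-module `S` a random normed module. -/
structure IsRNNorm (μ : Measure Ω) {S : Type} [AddCommGroup S]
    [Module (Ω →ₘ[μ] ℝ) S] (n : S → Ω →ₘ[μ] ℝ) : Prop where
  nonneg : ∀ x, 0 ≤ n x
  eq_zero_iff : ∀ x, n x = 0 ↔ x = 0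
  norm_smul : ∀ (ξ : Ω →ₘ[μ] ℝ) (x : S), n (ξ • x) = |ξ| * n x
  norm_add_le : ∀ x y, n (x + y) ≤ n x + n y

/-- `‖·‖` is an `L^∞`-norm making the `L^∞`-module `E` an `L^∞`-normed module. -/
structure IsLinfNorm (μ : Measure Ω) {E : Type} [AddCommGroup E]
    [Module (Linf μ) E] (n : E → Ω →ₘ[μ] ℝ) : Prop where
  nonneg : ∀ x, 0 ≤ n x
  mem_Linf : ∀ x, n x ∈ Linf μ
  eq_zero_iff : ∀ x, n x = 0 ↔ x = 0
  norm_smul : ∀ (ξ : Linf μ) (x : E), n (ξ • x) = |(ξ : Ω →ₘ[μ] ℝ)| * n x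
  norm_add_le : ∀ x y, n (x + y) ≤ n x + n y

/-- the metric `d(x,y) = E[1 ∧ ‖x-y‖]` associated to an `L⁰`- (or `L^∞`-) norm. -/
def ndist {S : Type} [AddCommGroup S] (μ : Measure Ω) (n : S → Ω →ₘ[μ] ℝ) (x y : S) : ℝ :=
  ∫ ω, min 1 |n (x - y) ω| ∂μ

/-- the distance of convergence in probability on `L⁰`. -/
def dProb (μ : Measure Ω) (ξ η : Ω →ₘ[μ] ℝ) : ℝ := ∫ ω, min 1 |ξ ω - η ω| ∂μ

/-- Cauchy property of a sequence with respect to a distance function. -/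
def dCauchy {S : Type} (d : S → S → ℝ) (x : ℕ → S) : Prop :=
  ∀ ε > (0:ℝ), ∃ N : ℕ, ∀ m ≥ N, ∀ k ≥ N, d (x m) (x k) < ε

/-- convergence of a sequence with respect to a distance function. -/
def dTendsto {S : Type} (d : S → S → ℝ) (x : ℕ → S) (y : S) : Prop :=
  Tendsto (fun k => d (x k) y) atTop (nhds 0)

/-- completeness with respect to a distance function. -/
def dComplete {S : Type} (d : S → S → ℝ) : Prop :=
  ∀ x : ℕ → S, dCauchy d x → ∃ y, dTendsto d x y

/-- a bundled complete-or-not random normed module over `L⁰(𝓕)`. -/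
structure RNMod (Ω : Type) [MeasurableSpace Ω] (μ : Measure Ω) where
  carrier : Type
  acg : AddCommGroup carrier
  mod : @Module (Ω →ₘ[μ] ℝ) carrier _ acg.toAddCommMonoid
  rnorm : carrier → Ω →ₘ[μ] ℝ
  isRNNorm : IsRNNorm μ rnorm

attribute [instance] RNMod.acg RNMod.mod

/-- the metric of the `(ε,λ)`-topology of a random normed module. -/
def RNMod.dist (S : RNMod Ω μ) : S.carrier → S.carrier → ℝ := ndist μ S.rnorm

/-- completeness of a random normed module in the `(ε,λ)`-topology. -/
def RNMod.Complete (S : RNMod Ω μ) : Prop := dComplete S.dist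

/-- the essential supremum `‖ξ‖_∞` of (the absolute value of) a random variable. -/
def NinfV (μ : Measure Ω) (ξ : Ω →ₘ[μ] ℝ) : ℝ := essSup (fun ω => |ξ ω|) μ

/-- `T` is an `L^∞`-module homomorphism from `E` into (the `L^∞`-module underlying) `S`. -/
def IsLinfModHom (μ : Measure Ω) {E S : Type} [AddCommGroup E] [Module (Linf μ) E]
    [AddCommGroup S] [Module (Ω →ₘ[μ] ℝ) S] (T : E → S) : Prop :=
  (∀ x y, T (x + y) = T x + T y) ∧
  (∀ (ξ : Linf μ) (x : E), T (ξ • x) = ((ξ : Ω →ₘ[μ] ℝ)) • T x)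

/-- `S` together with `T` is an `L⁰`-extension of the `L^∞`-normed module `(E, n)`:
`S` is a complete random normed module, `T` is a norm-preserving `L^∞`-module
homomorphism with dense range. -/
def IsL0Extension (μ : Measure Ω) {E : Type} [AddCommGroup E] [Module (Linf μ) E]
    (n : E → Ω →ₘ[μ] ℝ) (S : RNMod Ω μ) (T : E → S.carrier) : Prop :=
  S.Complete ∧ IsLinfModHom μ T ∧ (∀ x, S.rnorm (T x) = n x) ∧
  (∀ y : S.carrier, ∀ ε > (0:ℝ), ∃ x : E, S.dist (T x) y < ε)

/-- the set of elements of an `L⁰`-normed module with essentially bounded norm. -/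
def LinfPart (μ : Measure Ω) {S : Type} (n : S → Ω →ₘ[μ] ℝ) : Set S := {x | n x ∈ Linf μ}

/-- convergence in probability of a sequence of random variables. -/
def TendstoInProb (μ : Measure Ω) (ξ : ℕ → Ω →ₘ[μ] ℝ) (l : Ω →ₘ[μ] ℝ) : Prop :=
  Tendsto (fun k => dProb μ (ξ k) l) atTop (nhds 0)

/-- the countable concatenation hull `H⁰_cc(E)` of a subset `E` of a random normed module. -/
def Hcc (S : RNMod Ω μ) (E : Set S.carrier) : Set S.carrier :=
  {z | ∃ (x : ℕ → S.carrier) (P : MPartition Ω),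
    (∀ k, x k ∈ E) ∧ ∀ k, P.ind μ k • z = P.ind μ k • x k}

/-- `L(E) = L⁰ * E`, the set of `L⁰`-multiples of elements of `E`. -/
def Lgen (S : RNMod Ω μ) (E : Set S.carrier) : Set S.carrier :=
  {z | ∃ (ξ : Ω →ₘ[μ] ℝ) (x : S.carrier), x ∈ E ∧ z = ξ • x}

/-- `f` is a continuous `L^∞`-module homomorphism from `(E, n)` to `L^∞`, i.e. a member of
the dual `L^∞`-normed module `E′`. -/
def IsLinfDual (μ : Measure Ω) {E : Type} [AddCommGroup E] [Module (Linf μ) E]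
    (n : E → Ω →ₘ[μ] ℝ) (f : E → Ω →ₘ[μ] ℝ) : Prop :=
  (∀ x, f x ∈ Linf μ) ∧ (∀ x y, f (x + y) = f x + f y) ∧
  (∀ (ξ : Linf μ) (x : E), f (ξ • x) = (ξ : Ω →ₘ[μ] ℝ) * f x) ∧
  (∀ ε > (0:ℝ), ∃ δ > (0:ℝ), ∀ x, NinfV μ (n x) < δ → NinfV μ (f x) < ε)

/-- `g` is a continuous `L⁰`-module homomorphism from `S` to `L⁰`, i.e. a member of the
random conjugate space `S^*`. -/
def IsRNDual (μ : Measure Ω) (S : RNMod Ω μ) (g : S.carrier → Ω →ₘ[μ] ℝ) : Prop :=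
  (∀ x y, g (x + y) = g x + g y) ∧ (∀ (ξ : Ω →ₘ[μ] ℝ) x, g (ξ • x) = ξ * g x) ∧
  (∀ ε > (0:ℝ), ∃ δ > (0:ℝ), ∀ x, ndist μ S.rnorm x 0 < δ → dProb μ (g x) 0 < ε)

/-- the set `{|f(x)| : ‖x‖ ≤ 1}` whose supremum in the lattice `L⁰` is the dual norm `‖f‖′`. -/
def dualBall {X : Type} (n : X → Ω →ₘ[μ] ℝ) (f : X → Ω →ₘ[μ] ℝ) : Set (Ω →ₘ[μ] ℝ) :=
  {t | ∃ x, n x ≤ 1 ∧ t = |f x|}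

set_option linter.unusedVariables false
set_option linter.unusedSectionVars false

/-! ### Auxiliary lemmas -/

section Aux

variable [IsProbabilityMeasure μ]

lemma aux_ae_nonneg {ξ : Ω →ₘ[μ] ℝ} (h : 0 ≤ ξ) : ∀ᵐ ω ∂μ, 0 ≤ ξ ω := by
  have h' := AEEqFun.coeFn_le.2 h
  filter_upwards [h', AEEqFun.coeFn_zero (β := ℝ) (μ := μ)] with ω h1 h2
  rw [h2] at h1
  exact h1

lemma aux_min_nonneg (t : ℝ) : 0 ≤ min 1 |t| := le_min zero_le_one (abs_nonneg _)

lemma aux_meas_min (ξ : Ω →ₘ[μ] ℝ) : AEStronglyMeasurable (fun ω => min 1 |ξ ω|) μ :=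
  (continuous_const.min continuous_abs).comp_aestronglyMeasurable ξ.aestronglyMeasurable

lemma aux_integrable_min (ξ : Ω →ₘ[μ] ℝ) : Integrable (fun ω => min 1 |ξ ω|) μ := by
  refine (integrable_const (1:ℝ)).mono' (aux_meas_min ξ) (Eventually.of_forall fun ω => ?_)
  rw [Real.norm_eq_abs, abs_of_nonneg (aux_min_nonneg _)]
  exact min_le_left _ _

lemma aux_ninfv_le {ξ : Ω →ₘ[μ] ℝ} {c : ℝ} (hc : ∀ᵐ ω ∂μ, |ξ ω| ≤ c) :
    NinfV μ ξ ≤ c := by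
  have hb : IsBoundedUnder (· ≥ ·) (ae μ) fun ω => |ξ ω| :=
    ⟨0, eventually_map.2 (Eventually.of_forall fun ω => abs_nonneg _)⟩
  have : limsup (fun ω => |ξ ω|) (ae μ) ≤ c :=
    limsup_le_of_le hb.isCoboundedUnder_le hc
  exact this

lemma aux_ae_le_ninfv {ξ : Ω →ₘ[μ] ℝ} (hb : ξ ∈ Linf μ) :
    ∀ᵐ ω ∂μ, |ξ ω| ≤ NinfV μ ξ := by
  obtain ⟨c, hc⟩ := hb
  exact ae_le_essSup ⟨c, eventually_map.2 hc⟩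

lemma aux_ninfv_zero : NinfV μ (0 : Ω →ₘ[μ] ℝ) = 0 := by
  have h : (fun ω => |(0 : Ω →ₘ[μ] ℝ) ω|) =ᵐ[μ] fun _ => (0:ℝ) := by
    filter_upwards [AEEqFun.coeFn_zero (β := ℝ) (μ := μ)] with ω h
    simp [h]
  unfold NinfV
  rw [essSup_congr_ae h, essSup_const _ (IsProbabilityMeasure.ne_zero μ)]

lemma aux_abs_neg_one : |(-1 : Ω →ₘ[μ] ℝ)| = (1 : Ω →ₘ[μ] ℝ) := by
  apply AEEqFun.ext
  filter_upwards [AEEqFun.coeFn_abs (-1 : Ω →ₘ[μ] ℝ),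
    AEEqFun.coeFn_neg (1 : Ω →ₘ[μ] ℝ), AEEqFun.coeFn_one (β := ℝ) (μ := μ)] with ω h1 h2 h3
  rw [h1, h2]
  simp [h3]

lemma aux_min_add {a b c : ℝ} (h0 : 0 ≤ a) (hb : 0 ≤ b) (hc : 0 ≤ c) (ha : a ≤ b + c) :
    min 1 |a| ≤ min 1 |b| + min 1 |c| := by
  rw [abs_of_nonneg h0, abs_of_nonneg hb, abs_of_nonneg hc]
  rcases le_total 1 b with h | h
  · calc min 1 a ≤ 1 := min_le_left _ _
      _ ≤ min 1 b + min 1 c := by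
          rw [min_eq_left h]
          exact le_add_of_nonneg_right (le_min zero_le_one hc)
  rcases le_total 1 c with h' | h'
  · calc min 1 a ≤ 1 := min_le_left _ _
      _ ≤ min 1 b + min 1 c := by
          rw [min_eq_left h']
          exact le_add_of_nonneg_left (le_min zero_le_one hb)
  · rw [min_eq_right h, min_eq_right h']
    exact le_trans (min_le_right _ _) ha

section RNFacts

variable (S : RNMod Ω μ)

lemma aux_rnorm_neg (w : S.carrier) : S.rnorm (-w) = S.rnorm w := by
  rw [show -w = ((-1 : Ω →ₘ[μ] ℝ)) • w from (neg_one_smul _ w).symm,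
    S.isRNNorm.norm_smul, aux_abs_neg_one, one_mul]

lemma aux_ndist_nonneg (a b : S.carrier) : 0 ≤ ndist μ S.rnorm a b :=
  integral_nonneg fun ω => aux_min_nonneg _

lemma aux_ndist_comm (a b : S.carrier) : ndist μ S.rnorm a b = ndist μ S.rnorm b a := by
  show (∫ ω, min 1 |S.rnorm (a - b) ω| ∂μ) = ∫ ω, min 1 |S.rnorm (b - a) ω| ∂μ
  rw [show a - b = -(b - a) from (neg_sub b a).symm, aux_rnorm_neg]

lemma aux_ndist_triangle (a b c : S.carrier) :
    ndist μ S.rnorm a c ≤ ndist μ S.rnorm a b + ndist μ S.rnorm b c := by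
  have hsum := S.isRNNorm.norm_add_le (a - b) (b - c)
  rw [show a - b + (b - c) = a - c by abel] at hsum
  have key : (fun ω => min 1 |S.rnorm (a - c) ω|) ≤ᵐ[μ]
      fun ω => min 1 |S.rnorm (a - b) ω| + min 1 |S.rnorm (b - c) ω| := by
    filter_upwards [aux_ae_nonneg (S.isRNNorm.nonneg (a - c)),
      aux_ae_nonneg (S.isRNNorm.nonneg (a - b)), aux_ae_nonneg (S.isRNNorm.nonneg (b - c)),
      AEEqFun.coeFn_le.2 hsum, AEEqFun.coeFn_add (S.rnorm (a - b)) (S.rnorm (b - c))]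
      with ω p0 p1 p2 p3 p4
    rw [p4] at p3
    exact aux_min_add p0 p1 p2 (by simpa using p3)
  calc ndist μ S.rnorm a c
      ≤ ∫ ω, (min 1 |S.rnorm (a - b) ω| + min 1 |S.rnorm (b - c) ω|) ∂μ :=
        integral_mono_ae (aux_integrable_min _)
          ((aux_integrable_min _).add (aux_integrable_min _)) key
    _ = ndist μ S.rnorm a b + ndist μ S.rnorm b c :=
        integral_add (aux_integrable_min _) (aux_integrable_min _)

lemma aux_ndist_eq_zero {a b : S.carrier} (h : ndist μ S.rnorm a b = 0) : a = b := by
  have h0 : (fun ω => min 1 |S.rnorm (a - b) ω|) =ᵐ[μ] 0 :=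
    (integral_eq_zero_iff_of_nonneg_ae (Eventually.of_forall fun ω => aux_min_nonneg _)
      (aux_integrable_min _)).1 h
  have hae : ⇑(S.rnorm (a - b)) =ᵐ[μ] ⇑(0 : Ω →ₘ[μ] ℝ) := by
    filter_upwards [h0, aux_ae_nonneg (S.isRNNorm.nonneg (a - b)),
      AEEqFun.coeFn_zero (β := ℝ) (μ := μ)] with ω p1 p2 p3
    rw [p3]
    simp only [Pi.zero_apply] at p1
    rw [abs_of_nonneg p2] at p1
    by_contra hne
    have hpos : 0 < S.rnorm (a - b) ω := lt_of_le_of_ne p2 (Ne.symm hne)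
    have := lt_min one_pos hpos
    rw [p1] at this
    exact lt_irrefl 0 this
  have hz : S.rnorm (a - b) = 0 := AEEqFun.ext hae
  have := (S.isRNNorm.eq_zero_iff (a - b)).1 hz
  exact sub_eq_zero.1 this

lemma aux_ndist_le_of_ae {a b : S.carrier} {c : ℝ}
    (h : ∀ᵐ ω ∂μ, |S.rnorm (a - b) ω| ≤ c) : ndist μ S.rnorm a b ≤ c := by
  have hle : ndist μ S.rnorm a b ≤ ∫ _ω, c ∂μ := by
    refine integral_mono_ae (aux_integrable_min _) (integrable_const _) ?_
    filter_upwards [h] with ω hω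
    exact le_trans (min_le_right _ _) hω
  simpa using hle

lemma aux_ndist_mono {a b a' b' : S.carrier}
    (h : ∀ᵐ ω ∂μ, |S.rnorm (a - b) ω| ≤ |S.rnorm (a' - b') ω|) :
    ndist μ S.rnorm a b ≤ ndist μ S.rnorm a' b' := by
  refine integral_mono_ae (aux_integrable_min _) (aux_integrable_min _) ?_
  filter_upwards [h] with ω hω
  exact min_le_min le_rfl hω

end RNFacts

section EFacts

variable {E : Type} [AddCommGroup E] [Module (Linf μ) E] {n : E → Ω →ₘ[μ] ℝ}

lemma aux_n_zero (hn : IsLinfNorm μ n) : n 0 = 0 := (hn.eq_zero_iff 0).2 rfl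

lemma aux_n_neg (hn : IsLinfNorm μ n) (x : E) : n (-x) = n x := by
  have h1 : (-x) = ((-1 : Linf μ)) • x := (neg_one_smul (Linf μ) x).symm
  have hco : ((-1 : Linf μ) : Ω →ₘ[μ] ℝ) = -1 := rfl
  rw [h1, hn.norm_smul, hco, aux_abs_neg_one, one_mul]

lemma aux_dE_comm (hn : IsLinfNorm μ n) (a b : E) :
    NinfV μ (n (a - b)) = NinfV μ (n (b - a)) := by
  rw [show a - b = -(b - a) from (neg_sub b a).symm, aux_n_neg hn]

lemma aux_dE_triangle (hn : IsLinfNorm μ n) (a b c : E) :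
    NinfV μ (n (a - c)) ≤ NinfV μ (n (a - b)) + NinfV μ (n (b - c)) := by
  apply aux_ninfv_le
  have hsum := hn.norm_add_le (a - b) (b - c)
  rw [show a - b + (b - c) = a - c by abel] at hsum
  filter_upwards [AEEqFun.coeFn_le.2 hsum, AEEqFun.coeFn_add (n (a - b)) (n (b - c)),
    aux_ae_nonneg (hn.nonneg (a - c)),
    aux_ae_le_ninfv (hn.mem_Linf (a - b)), aux_ae_le_ninfv (hn.mem_Linf (b - c))]
    with ω p1 p2 q0 r1 r2
  rw [abs_of_nonneg q0]
  rw [p2] at p1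
  calc n (a - c) ω ≤ n (a - b) ω + n (b - c) ω := by simpa using p1
    _ ≤ |n (a - b) ω| + |n (b - c) ω| := add_le_add (le_abs_self _) (le_abs_self _)
    _ ≤ _ := add_le_add r1 r2

end EFacts

section IndFacts

lemma aux_ind_coe (A : Set Ω) (hA : MeasurableSet A) :
    ⇑(indL0 μ A hA) =ᵐ[μ] A.indicator (1 : Ω → ℝ) := AEEqFun.coeFn_mk _ _

lemma aux_ind_bound (A : Set Ω) (hA : MeasurableSet A) :
    ∀ᵐ ω ∂μ, |indL0 μ A hA ω| ≤ 1 := by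
  filter_upwards [aux_ind_coe A hA] with ω h
  rw [h]
  by_cases hω : ω ∈ A <;> simp [Set.indicator_apply, hω]

/-- the indicator as an element of `L^∞`. -/
def auxIndLinf (μ : Measure Ω) [IsProbabilityMeasure μ] (A : Set Ω) (hA : MeasurableSet A) :
    Linf μ := ⟨indL0 μ A hA, 1, aux_ind_bound A hA⟩

lemma aux_ind_idem (A : Set Ω) (hA : MeasurableSet A) :
    indL0 μ A hA * indL0 μ A hA = indL0 μ A hA := by
  apply AEEqFun.ext
  filter_upwards [AEEqFun.coeFn_mul (indL0 μ A hA) (indL0 μ A hA), aux_ind_coe A hA]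
    with ω h1 h2
  rw [h1, Pi.mul_apply, h2]
  by_cases hω : ω ∈ A <;> simp [Set.indicator_apply, hω]

end IndFacts

end Aux
/-- if `(E,‖·‖)` is a complete `L^∞`-normed module (complete in the
`‖·‖_∞`-norm), then every element of its `L⁰`-extension `E₀` is a countable
concatenation of elements of `E`; that is, `E₀ = H⁰_cc(E)`. -/
theorem L0_extension_eq_Hcc_of_complete
    {Ω : Type} [MeasurableSpace Ω] (μ : Measure Ω) [IsProbabilityMeasure μ]
    {E : Type} [AddCommGroup E] [Module (Linf μ) E]
    (n : E → Ω →ₘ[μ] ℝ) (hn : IsLinfNorm μ n)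
    (hcomp : dComplete (fun x y : E => NinfV μ (n (x - y))))
    (S : RNMod Ω μ) (T : E → S.carrier) (hext : IsL0Extension μ n S T) :
    ∀ z : S.carrier, ∃ (y : ℕ → E) (P : MPartition Ω),
      ∀ k, P.ind μ k • z = P.ind μ k • T (y k) := by
  classical
  intro z
  obtain ⟨hScomp, ⟨hadd, hsmul⟩, hTnorm, hdense⟩ := hext
  -- T is compatible with subtraction
  have hTneg : ∀ w : E, T (-w) = -T w := by
    intro w
    have h1 : (-w) = (-1 : Linf μ) • w := (neg_one_smul (Linf μ) w).symm
    have hco : ((-1 : Linf μ) : Ω →ₘ[μ] ℝ) = -1 := rfl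
    rw [h1, hsmul, hco, neg_smul, one_smul]
  have hTsub : ∀ a b : E, T (a - b) = T a - T b := by
    intro a b
    rw [sub_eq_add_neg, hadd, hTneg, sub_eq_add_neg]
  -- choose an approximating sequence
  have hchoice : ∀ m : ℕ, ∃ x : E, S.dist (T x) z < (8:ℝ)⁻¹ ^ m := by
    intro m
    exact hdense z ((8:ℝ)⁻¹ ^ m) (by positivity)
  choose x hx using hchoice
  have hx' : ∀ m, ndist μ S.rnorm (T (x m)) z < (8:ℝ)⁻¹ ^ m := hx
  -- the norms of successive differences, with measurable representatives
  set f : ℕ → Ω →ₘ[μ] ℝ := fun m => n (x (m+1) - x m) with hf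
  have hfm : ∀ m, AEMeasurable (⇑(f m)) μ := fun m => (f m).aemeasurable
  set g : ℕ → Ω → ℝ := fun m => (hfm m).mk _ with hgdef
  have hg_meas : ∀ m, Measurable (g m) := fun m => (hfm m).measurable_mk
  have hg_ae : ∀ m, ⇑(f m) =ᵐ[μ] g m := fun m => (hfm m).ae_eq_mk
  -- exceptional sets
  set C : ℕ → Set Ω := fun m => {ω | (2:ℝ)⁻¹ ^ m < g m ω} with hCdef
  have hC_meas : ∀ m, MeasurableSet (C m) := fun m =>
    measurableSet_lt measurable_const (hg_meas m)
  -- distance bound on consecutive terms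
  have hnd2 : ∀ m, ndist μ S.rnorm (T (x (m+1))) (T (x m)) < 2 * (8:ℝ)⁻¹ ^ m := by
    intro m
    have tri := aux_ndist_triangle S (T (x (m+1))) z (T (x m))
    have h1 := hx' (m+1)
    have h2 := hx' m
    have hcm : ndist μ S.rnorm z (T (x m)) = ndist μ S.rnorm (T (x m)) z :=
      aux_ndist_comm S _ _
    have hcm1 : ndist μ S.rnorm (T (x (m+1))) z < (8:ℝ)⁻¹ ^ m := by
      have : (8:ℝ)⁻¹ ^ (m+1) ≤ (8:ℝ)⁻¹ ^ m :=
        pow_le_pow_of_le_one (by norm_num) (by norm_num) (Nat.le_succ m)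
      linarith
    rw [hcm] at tri
    linarith
  -- Chebyshev bound
  have hcheb : ∀ m, μ (C m) ≤ ENNReal.ofReal (2 * (4:ℝ)⁻¹ ^ m) := by
    intro m
    have hr : S.rnorm (T (x (m+1)) - T (x m)) = f m := by
      rw [← hTsub, hTnorm]
    have hub : (2:ℝ)⁻¹ ^ m * (μ (C m)).toReal
        ≤ ndist μ S.rnorm (T (x (m+1))) (T (x m)) := by
      have hset : ∫ _ω in C m, (2:ℝ)⁻¹ ^ m ∂μ
          ≤ ∫ ω in C m, min 1 |S.rnorm (T (x (m+1)) - T (x m)) ω| ∂μ := by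
        refine integral_mono_ae (integrable_const _) ((aux_integrable_min _).restrict) ?_
        rw [EventuallyLE, ae_restrict_iff' (hC_meas m)]
        filter_upwards [hg_ae m] with ω hω hmem
        rw [hr, hω]
        have hτ1 : (2:ℝ)⁻¹ ^ m ≤ 1 := pow_le_one₀ (by norm_num) (by norm_num)
        have hτg : (2:ℝ)⁻¹ ^ m ≤ |g m ω| := le_trans (le_of_lt hmem) (le_abs_self _)
        exact le_min hτ1 hτg
      have hle2 : ∫ ω in C m, min 1 |S.rnorm (T (x (m+1)) - T (x m)) ω| ∂μ
          ≤ ndist μ S.rnorm (T (x (m+1))) (T (x m)) :=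
        setIntegral_le_integral (aux_integrable_min _)
          (Eventually.of_forall fun ω => aux_min_nonneg _)
      calc (2:ℝ)⁻¹ ^ m * (μ (C m)).toReal
          = ∫ _ω in C m, (2:ℝ)⁻¹ ^ m ∂μ := by
            rw [setIntegral_const, smul_eq_mul, mul_comm]; rfl
        _ ≤ _ := hset.trans hle2
    have h3 : (μ (C m)).toReal ≤ 2 * (4:ℝ)⁻¹ ^ m := by
      have hτpos : (0:ℝ) < (2:ℝ)⁻¹ ^ m := by positivity
      have h8 : (8:ℝ)⁻¹ ^ m = (4:ℝ)⁻¹ ^ m * (2:ℝ)⁻¹ ^ m := by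
        rw [← mul_pow]; norm_num
      have := (hub.trans_lt (hnd2 m)).le
      rw [h8] at this
      nlinarith [this, hτpos]
    exact (ENNReal.le_ofReal_iff_toReal_le (measure_ne_top μ _) (by positivity)).2 h3
  -- total measure of exceptional sets is finite
  have hsum : (∑' m, μ (C m)) ≠ ⊤ := by
    have hle : (∑' m, μ (C m)) ≤ ∑' m, ENNReal.ofReal (2 * (4:ℝ)⁻¹ ^ m) :=
      ENNReal.tsum_le_tsum hcheb
    have heq : (∑' m, ENNReal.ofReal (2 * (4:ℝ)⁻¹ ^ m))
        = ENNReal.ofReal 2 * ∑' m, (ENNReal.ofReal (4:ℝ)⁻¹) ^ m := by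
      rw [← ENNReal.tsum_mul_left]
      congr 1
      funext m
      rw [ENNReal.ofReal_mul (by norm_num), ENNReal.ofReal_pow (by norm_num)]
    have hgeo : (∑' m, (ENNReal.ofReal (4:ℝ)⁻¹) ^ m)
        = (1 - ENNReal.ofReal (4:ℝ)⁻¹)⁻¹ := ENNReal.tsum_geometric _
    have hne : (1 - ENNReal.ofReal (4:ℝ)⁻¹) ≠ 0 := by
      have h1 : ENNReal.ofReal (4:ℝ)⁻¹ < 1 := ENNReal.ofReal_lt_one.2 (by norm_num)
      exact (tsub_pos_of_lt h1).ne'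
    have hfin : (∑' m, ENNReal.ofReal (2 * (4:ℝ)⁻¹ ^ m)) ≠ ⊤ := by
      rw [heq, hgeo]
      exact ENNReal.mul_ne_top ENNReal.ofReal_ne_top (ENNReal.inv_ne_top.2 hne)
    exact ne_top_of_le_ne_top hfin hle
  -- the good sets
  set B : ℕ → Set Ω := fun N => {ω | ∀ m, N ≤ m → g m ω ≤ (2:ℝ)⁻¹ ^ m} with hBdef
  have hB_meas : ∀ N, MeasurableSet (B N) := by
    intro N
    have : B N = ⋂ m, ⋂ (_ : N ≤ m), {ω | g m ω ≤ (2:ℝ)⁻¹ ^ m} := by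
      ext ω; simp [hBdef, Set.mem_iInter]
    rw [this]
    exact MeasurableSet.iInter fun m => MeasurableSet.iInter fun _ =>
      measurableSet_le (hg_meas m) measurable_const
  have hB_mono : ∀ {N N'}, N ≤ N' → B N ⊆ B N' := by
    intro N N' hNN ω hω m hm
    exact hω m (le_trans hNN hm)
  have hB_compl : ∀ N, (B N)ᶜ ⊆ ⋃ j, C (j + N) := by
    intro N ω hω
    simp only [hBdef, Set.mem_compl_iff, Set.mem_setOf_eq, not_forall] at hω
    obtain ⟨m, hm, hlt⟩ := hω
    push_neg at hlt
    refine Set.mem_iUnion.2 ⟨m - N, ?_⟩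
    have hmN : m - N + N = m := Nat.sub_add_cancel hm
    rw [hmN]
    exact hlt
  -- the remainder is null
  set R : Set Ω := (⋃ N, B N)ᶜ with hRdef
  have hR_meas : MeasurableSet R := (MeasurableSet.iUnion hB_meas).compl
  have hR_null : μ R = 0 := by
    have hRB : ∀ N, R ⊆ (B N)ᶜ := fun N =>
      Set.compl_subset_compl.2 (Set.subset_iUnion B N)
    have h1 : ∀ N, μ R ≤ ∑' j, μ (C (j + N)) := by
      intro N
      calc μ R ≤ μ ((B N)ᶜ) := measure_mono (hRB N)
        _ ≤ μ (⋃ j, C (j + N)) := measure_mono (hB_compl N)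
        _ ≤ ∑' j, μ (C (j + N)) := measure_iUnion_le _
    have h2 : Tendsto (fun N => ∑' j, μ (C (j + N))) atTop (nhds 0) :=
      ENNReal.tendsto_sum_nat_add _ hsum
    have h3 : μ R ≤ 0 := ge_of_tendsto' h2 h1
    exact le_antisymm h3 zero_le
  -- the main claim
  have main : ∀ (N : ℕ) (D : Set Ω) (hD : MeasurableSet D), D ⊆ B N →
      ∃ y : E, indL0 μ D hD • z = indL0 μ D hD • T y := by
    intro N D hD hDB
    set I0 : Ω →ₘ[μ] ℝ := indL0 μ D hD with hI0
    set IL : Linf μ := auxIndLinf μ D hD with hIL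
    have hILcoe : (IL : Ω →ₘ[μ] ℝ) = I0 := rfl
    set v : ℕ → E := fun j => IL • x (max j N) with hv
    -- step bound
    have hstep : ∀ j, NinfV μ (n (v j - v (j+1))) ≤ (2:ℝ)⁻¹ ^ j := by
      intro j
      rcases lt_or_ge j N with hj | hj
      · have h1 : max j N = N := max_eq_right hj.le
        have h2 : max (j+1) N = N := max_eq_right hj
        have hvv : v j - v (j+1) = 0 := by simp [hv, h1, h2]
        rw [hvv, aux_n_zero hn, aux_ninfv_zero]
        positivity
      · have h1 : max j N = j := max_eq_left hj
        have h2 : max (j+1) N = j+1 := max_eq_left (le_trans hj (Nat.le_succ j))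
        have hvv : v j - v (j+1) = IL • (x j - x (j+1)) := by
          rw [hv]; simp only [h1, h2, smul_sub]
        rw [hvv, hn.norm_smul, hILcoe]
        have hflip : n (x j - x (j+1)) = f j := by
          rw [show x j - x (j+1) = -(x (j+1) - x j) by abel, aux_n_neg hn, hf]
        rw [hflip]
        apply aux_ninfv_le
        filter_upwards [AEEqFun.coeFn_mul |I0| (f j), AEEqFun.coeFn_abs I0,
          aux_ind_coe D hD, hg_ae j, aux_ae_nonneg (hn.nonneg (x (j+1) - x j))]
          with ω p1 p2 p3 p4 p5
        rw [p1, Pi.mul_apply, p2, p3]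
        by_cases hω : ω ∈ D
        · have hgb : g j ω ≤ (2:ℝ)⁻¹ ^ j := hDB hω j hj
          have hfg : f j ω = g j ω := p4
          rw [Set.indicator_of_mem hω]
          simp only [Pi.one_apply, abs_one, one_mul]
          calc |(f j : Ω → ℝ) ω| = (f j : Ω → ℝ) ω := abs_of_nonneg p5
            _ = g j ω := hfg
            _ ≤ _ := hgb
        · rw [Set.indicator_of_notMem hω]
          simp only [abs_zero, zero_mul, abs_zero]
          positivity
    -- chain bound
    have hchain : ∀ m l, NinfV μ (n (v m - v (m+l)))
        ≤ 2 * (2:ℝ)⁻¹ ^ m - 2 * (2:ℝ)⁻¹ ^ (m+l) := by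
      intro m l
      induction l with
      | zero =>
        have : v m - v (m+0) = 0 := by simp
        rw [this, aux_n_zero hn, aux_ninfv_zero]
        simp
      | succ l ih =>
        have tri := aux_dE_triangle hn (v m) (v (m+l)) (v (m+l+1))
        have hs := hstep (m+l)
        have hpow : (2:ℝ)⁻¹ ^ (m+l+1) = (2:ℝ)⁻¹ ^ (m+l) * 2⁻¹ := pow_succ _ _
        have : NinfV μ (n (v m - v (m+l+1)))
            ≤ 2 * (2:ℝ)⁻¹ ^ m - 2 * (2:ℝ)⁻¹ ^ (m+l) + (2:ℝ)⁻¹ ^ (m+l) := by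
          linarith
        calc NinfV μ (n (v m - v (m + (l+1)))) = NinfV μ (n (v m - v (m+l+1))) := by
              rw [show m + (l+1) = m + l + 1 by ring]
          _ ≤ _ := this
          _ ≤ 2 * (2:ℝ)⁻¹ ^ m - 2 * (2:ℝ)⁻¹ ^ (m+(l+1)) := by
              rw [show m + (l+1) = m + l + 1 by ring, hpow]; linarith
    -- Cauchy
    have hcauchy : dCauchy (fun a b : E => NinfV μ (n (a - b))) v := by
      intro ε hε
      obtain ⟨M, hM⟩ : ∃ M : ℕ, 2 * (2:ℝ)⁻¹ ^ M < ε := by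
        obtain ⟨M, hM⟩ := exists_pow_lt_of_lt_one (show (0:ℝ) < ε/2 by linarith)
          (show (2:ℝ)⁻¹ < 1 by norm_num)
        exact ⟨M, by linarith⟩
      refine ⟨M, fun m hm k hk => ?_⟩
      have key : ∀ m k : ℕ, M ≤ m → m ≤ k → NinfV μ (n (v m - v k)) < ε := by
        intro m k hm hmk
        have hc := hchain m (k - m)
        rw [Nat.add_sub_cancel' hmk] at hc
        have hτ : (2:ℝ)⁻¹ ^ m ≤ (2:ℝ)⁻¹ ^ M :=
          pow_le_pow_of_le_one (by norm_num) (by norm_num) hm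
        have hpos : (0:ℝ) < (2:ℝ)⁻¹ ^ k := by positivity
        linarith
      rcases le_total m k with h | h
      · exact key m k hm h
      · show NinfV μ (n (v m - v k)) < ε
        rw [aux_dE_comm hn]
        exact key k m hk h
    obtain ⟨y, hy⟩ := hcomp v hcauchy
    refine ⟨y, ?_⟩
    -- I0 • z = T y
    have hzy : I0 • z = T y := by
      have hb : ∀ ε : ℝ, 0 < ε → ndist μ S.rnorm (I0 • z) (T y) < ε := by
        intro ε hε
        have e1 : ∀ᶠ k in atTop, NinfV μ (n (v k - y)) < ε/3 :=
          hy.eventually (gt_mem_nhds (by linarith))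
        have e2 : ∀ᶠ k in atTop, (8:ℝ)⁻¹ ^ k < ε/3 :=
          (tendsto_pow_atTop_nhds_zero_of_lt_one (by norm_num) (by norm_num)).eventually
            (gt_mem_nhds (by linarith))
        obtain ⟨k, h1, h2⟩ := (e1.and e2).exists
        have tri := aux_ndist_triangle S (I0 • z) (I0 • T (x (max k N))) (T y)
        have t1 : ndist μ S.rnorm (I0 • z) (I0 • T (x (max k N))) < ε/3 := by
          have hsm : I0 • z - I0 • T (x (max k N)) = I0 • (z - T (x (max k N))) :=
            (smul_sub _ _ _).symm
          have hmono : ndist μ S.rnorm (I0 • z) (I0 • T (x (max k N)))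
              ≤ ndist μ S.rnorm z (T (x (max k N))) := by
            apply aux_ndist_mono S
            rw [hsm, S.isRNNorm.norm_smul]
            filter_upwards [AEEqFun.coeFn_mul |I0| (S.rnorm (z - T (x (max k N)))),
              AEEqFun.coeFn_abs I0, aux_ind_coe D hD] with ω p1 p2 p3
            rw [p1, Pi.mul_apply, p2, p3]
            rw [abs_mul, abs_abs]
            by_cases hω : ω ∈ D
            · rw [Set.indicator_of_mem hω]; simp
            · rw [Set.indicator_of_notMem hω]; simp [abs_nonneg]
          have hcm : ndist μ S.rnorm z (T (x (max k N)))
              = ndist μ S.rnorm (T (x (max k N))) z := aux_ndist_comm S _ _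
          have hxk : ndist μ S.rnorm (T (x (max k N))) z < (8:ℝ)⁻¹ ^ (max k N) :=
            hx' _
          have hpk : (8:ℝ)⁻¹ ^ (max k N) ≤ (8:ℝ)⁻¹ ^ k :=
            pow_le_pow_of_le_one (by norm_num) (by norm_num) (le_max_left _ _)
          calc ndist μ S.rnorm (I0 • z) (I0 • T (x (max k N)))
              ≤ ndist μ S.rnorm z (T (x (max k N))) := hmono
            _ = ndist μ S.rnorm (T (x (max k N))) z := hcm
            _ < (8:ℝ)⁻¹ ^ (max k N) := hxk
            _ ≤ (8:ℝ)⁻¹ ^ k := hpk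
            _ < ε/3 := h2
        have t2 : ndist μ S.rnorm (I0 • T (x (max k N))) (T y) ≤ ε/3 := by
          have hTv : I0 • T (x (max k N)) = T (v k) := by
            rw [hv]
            rw [hsmul, hILcoe]
          rw [hTv]
          apply aux_ndist_le_of_ae S
          have hT : S.rnorm (T (v k) - T y) = n (v k - y) := by
            rw [← hTsub, hTnorm]
          rw [hT]
          filter_upwards [aux_ae_le_ninfv (hn.mem_Linf (v k - y))] with ω p
          exact le_trans p h1.le
        linarith
      by_contra hne
      have h0 := aux_ndist_nonneg S (I0 • z) (T y)
      have hneq : ndist μ S.rnorm (I0 • z) (T y) ≠ 0 := fun h => hne (aux_ndist_eq_zero S h)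
      have hpos : 0 < ndist μ S.rnorm (I0 • z) (T y) := lt_of_le_of_ne h0 (Ne.symm hneq)
      exact lt_irrefl _ (hb _ hpos)
    calc I0 • z = (I0 * I0) • z := by rw [aux_ind_idem]
      _ = I0 • (I0 • z) := mul_smul _ _ _
      _ = I0 • T y := by rw [hzy]
  -- assemble the partition
  set A : ℕ → Set Ω := fun N => Nat.rec (B 0 ∪ R) (fun N _ => B (N+1) \ B N) N with hAdef
  have hA0 : A 0 = B 0 ∪ R := rfl
  have hAS : ∀ N, A (N+1) = B (N+1) \ B N := fun N => rfl
  have hA_meas : ∀ N, MeasurableSet (A N) := by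
    intro N
    cases N with
    | zero => exact (hB_meas 0).union hR_meas
    | succ N => exact (hB_meas (N+1)).diff (hB_meas N)
  have hA_disj : ∀ m k, m ≠ k → A m ∩ A k = ∅ := by
    have key : ∀ m k, m < k → A m ∩ A k = ∅ := by
      intro m k hmk
      obtain ⟨k', rfl⟩ : ∃ k', k = k' + 1 := ⟨k - 1, by omega⟩
      rw [Set.eq_empty_iff_forall_notMem]
      rintro ω ⟨hω1, hω2⟩
      rw [hAS] at hω2
      obtain ⟨hωB, hωnB⟩ := hω2
      cases m with
      | zero =>
        rw [hA0] at hω1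
        rcases hω1 with h | h
        · exact hωnB (hB_mono (Nat.zero_le k') h)
        · exact h (Set.mem_iUnion.2 ⟨k' + 1, hωB⟩)
      | succ m' =>
        rw [hAS] at hω1
        have hle : m' + 1 ≤ k' := by omega
        exact hωnB (hB_mono hle hω1.1)
    intro m k hne
    rcases lt_or_gt_of_ne hne with h | h
    · exact key m k h
    · rw [Set.inter_comm]; exact key k m h
  have hA_cover : (⋃ k, A k) = Set.univ := by
    rw [Set.eq_univ_iff_forall]
    intro ω
    by_cases hωR : ω ∈ ⋃ N, B N
    · have hex : ∃ N, ω ∈ B N := Set.mem_iUnion.1 hωR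
      set N₀ := Nat.find hex with hN₀
      have hmem : ω ∈ B N₀ := Nat.find_spec hex
      cases hN : N₀ with
      | zero =>
        refine Set.mem_iUnion.2 ⟨0, ?_⟩
        rw [hA0]
        exact Set.mem_union_left _ (hN ▸ hmem)
      | succ N' =>
        refine Set.mem_iUnion.2 ⟨N' + 1, ?_⟩
        rw [hAS]
        refine ⟨hN ▸ hmem, ?_⟩
        have := Nat.find_min hex (show N' < N₀ by omega)
        exact this
    · refine Set.mem_iUnion.2 ⟨0, ?_⟩
      rw [hA0]
      exact Set.mem_union_right _ hωR
  set P : MPartition Ω := ⟨A, hA_meas, hA_disj, hA_cover⟩ with hP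
  -- choose the y's
  have hys : ∀ k : ℕ, ∃ y : E, indL0 μ (A k) (hA_meas k) • z = indL0 μ (A k) (hA_meas k) • T y := by
    intro k
    cases k with
    | zero =>
      obtain ⟨y, hy⟩ := main 0 (B 0) (hB_meas 0) (le_refl _)
      refine ⟨y, ?_⟩
      have hind : indL0 μ (A 0) (hA_meas 0) = indL0 μ (B 0) (hB_meas 0) := by
        apply AEEqFun.mk_eq_mk.2
        have hR' : ∀ᵐ ω ∂μ, ω ∉ R := measure_eq_zero_iff_ae_notMem.1 hR_null
        filter_upwards [hR'] with ω hω
        rw [hA0]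
        by_cases hωB : ω ∈ B 0
        · rw [Set.indicator_of_mem (Set.mem_union_left _ hωB), Set.indicator_of_mem hωB]
        · rw [Set.indicator_of_notMem (fun h => h.elim hωB hω),
            Set.indicator_of_notMem hωB]
      rw [hind]
      exact hy
    | succ N =>
      have hsub : A (N+1) ⊆ B (N+1) := by rw [hAS]; exact Set.diff_subset
      exact main (N+1) (A (N+1)) (hA_meas (N+1)) hsub
  choose ys hys' using hys
  exact ⟨ys, P, fun k => hys' k⟩

end
end

section
/- Let Ω = ℕ with P({k}) = 2^{-k} and E = {φ : Ω → ℝ : φ(k)=0 for all large k} ⊂ L^∞. Then the L^0-submodule L^0 * E of L^0 generated by E equals E itself, while the countable concatenation hull H^0_cc(E) equals L^0. In particular L(E) = E is a proper subset of H^0_cc(E) = L^0. -/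
open MeasureTheory Filter
noncomputable section

variable {Ω : Type} [MeasurableSpace Ω] {μ : Measure Ω}

/-- the set of classes of finitely supported functions in `L⁰(ℕ)`. -/
def FinSupp (μ : Measure ℕ) : Set (ℕ →ₘ[μ] ℝ) :=
  {φ | ∃ f : ℕ → ℝ, (∃ N : ℕ, ∀ k ≥ N, f k = 0) ∧
    φ = AEEqFun.mk f measurable_from_top.aestronglyMeasurable}

/-- on `Ω = ℕ` with `P({k}) = 2^{-(k+1)}` and `E` the finitely
supported sequences, `L(E) = L⁰ * E = E` while `H⁰_cc(E) = L⁰`; in particular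
`L(E) = E` is a proper subset of `H⁰_cc(E) = L⁰`. -/
theorem Lgen_eq_self_and_Hcc_eq_univ
    (μ : Measure ℕ) [IsProbabilityMeasure μ]
    (hμ : ∀ k : ℕ, μ {k} = ENNReal.ofReal ((1:ℝ) / 2 ^ (k + 1))) :
    {z : ℕ →ₘ[μ] ℝ | ∃ ξ : ℕ →ₘ[μ] ℝ, ∃ φ ∈ FinSupp μ, z = ξ * φ} = FinSupp μ ∧
    {z : ℕ →ₘ[μ] ℝ | ∃ (x : ℕ → ℕ →ₘ[μ] ℝ) (P : MPartition ℕ),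
      (∀ k, x k ∈ FinSupp μ) ∧ ∀ k, P.ind μ k * z = P.ind μ k * x k} = Set.univ ∧
    FinSupp μ ≠ (Set.univ : Set (ℕ →ₘ[μ] ℝ)) := by
  have hae : ∀ {f g : ℕ → ℝ}, f =ᵐ[μ] g → f = g := by
    intro f g h
    funext k
    by_contra hk
    have h0 : μ {x | ¬ f x = g x} = 0 := h
    have : μ {k} = 0 := measure_mono_null (by intro x hx; simp at hx; subst hx; exact hk) h0
    rw [hμ k] at this
    simp [ENNReal.ofReal_eq_zero] at this
  refine ⟨?_, ?_, ?_⟩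
  · ext z
    simp only [Set.mem_setOf_eq]
    constructor
    · rintro ⟨ξ, φ, ⟨f, ⟨N, hN⟩, rfl⟩, rfl⟩
      refine ⟨fun n => ξ n * f n, ⟨N, fun k hk => by simp [hN k hk]⟩, ?_⟩
      conv_lhs => rw [← AEEqFun.mk_coeFn ξ]
      rw [AEEqFun.mk_mul_mk]
      rfl
    · rintro ⟨f, hf, rfl⟩
      exact ⟨1, _, ⟨f, hf, rfl⟩, (one_mul _).symm⟩
  · ext z
    simp only [Set.mem_setOf_eq, Set.mem_univ, iff_true]
    refine ⟨fun k => AEEqFun.mk (fun n => if n = k then z n else 0)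
        measurable_from_top.aestronglyMeasurable,
      ⟨fun k => {k}, fun k => measurableSet_singleton k, ?_, ?_⟩, ?_, ?_⟩
    · intro m k hmk
      ext x
      simp only [Set.mem_inter_iff, Set.mem_singleton_iff, Set.mem_empty_iff_false, iff_false,
        not_and]
      rintro rfl rfl; exact hmk rfl
    · ext x; simp
    · intro k
      exact ⟨fun n => if n = k then z n else 0, ⟨k + 1, fun m hm => by
        simp only [ite_eq_right_iff]; intro h; omega⟩, rfl⟩
    · intro k
      simp only [MPartition.ind, indL0]
      conv_lhs => rw [← AEEqFun.mk_coeFn z]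
      rw [AEEqFun.mk_mul_mk, AEEqFun.mk_mul_mk, AEEqFun.mk_eq_mk]
      apply Filter.EventuallyEq.of_eq
      funext n
      by_cases h : n = k <;> simp [Set.indicator, h]
  · intro h
    have h1 : (1 : ℕ →ₘ[μ] ℝ) ∈ FinSupp μ := h ▸ Set.mem_univ _
    obtain ⟨f, ⟨N, hN⟩, hf⟩ := h1
    have : f =ᵐ[μ] (fun _ => (1:ℝ)) := by
      have := AEEqFun.coeFn_mk f (measurable_from_top.aestronglyMeasurable (μ := μ))
      rw [← hf] at this
      exact this.symm.trans (AEEqFun.coeFn_one (μ := μ))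
    have := hae this
    have := congrFun this N
    simp [hN N le_rfl] at this


end
end

section
/- Let (E, ‖·‖) be a complete L^∞-normed module whose unit ball U(E) = {x ∈ E : ‖x‖ ≤ 1} has the countable concatenation property, and let E_0 be its L^0-extension random normed module. Then E = L^∞(E_0) := {x ∈ E_0 : ‖x‖_0 ∈ L^∞}. -/
open MeasureTheory Filter
noncomputable section

variable {Ω : Type} [MeasurableSpace Ω] {μ : Measure Ω}

/-! ### Auxiliary lemmas for Statement 15 -/

section CCPAux

variable {Ω : Type} [MeasurableSpace Ω] {μ : Measure Ω}

lemma ae_of_le' {a b : Ω →ₘ[μ] ℝ} (h : a ≤ b) : ∀ᵐ ω ∂μ, a ω ≤ b ω :=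
  AEEqFun.coeFn_le.mpr h

lemma le_of_ae' {a b : Ω →ₘ[μ] ℝ} (h : ∀ᵐ ω ∂μ, a ω ≤ b ω) : a ≤ b :=
  AEEqFun.coeFn_le.mp h

lemma nonneg_ae' {a : Ω →ₘ[μ] ℝ} (h : 0 ≤ a) : ∀ᵐ ω ∂μ, 0 ≤ a ω := by
  filter_upwards [ae_of_le' h, AEEqFun.coeFn_zero (β := ℝ) (μ := μ)] with ω h1 h2
  rw [h2] at h1; exact h1

lemma le_one_ae' {a : Ω →ₘ[μ] ℝ} (h : a ≤ 1) : ∀ᵐ ω ∂μ, a ω ≤ 1 := by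
  filter_upwards [ae_of_le' h, AEEqFun.coeFn_one (β := ℝ) (μ := μ)] with ω h1 h2
  rw [h2] at h1; exact h1

lemma abs_neg_one' : |(-1 : Ω →ₘ[μ] ℝ)| = 1 := by
  apply AEEqFun.ext
  filter_upwards [AEEqFun.coeFn_abs (-1 : Ω →ₘ[μ] ℝ),
    AEEqFun.coeFn_neg (1 : Ω →ₘ[μ] ℝ), AEEqFun.coeFn_one (β := ℝ) (μ := μ)] with ω h1 h2 h3
  rw [h1, h2]; simp [h3]

lemma rnorm_zero' (S : RNMod Ω μ) : S.rnorm 0 = 0 := (S.isRNNorm.eq_zero_iff 0).mpr rfl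

lemma rnorm_neg' (S : RNMod Ω μ) (v : S.carrier) : S.rnorm (-v) = S.rnorm v := by
  rw [← neg_one_smul (Ω →ₘ[μ] ℝ) v, S.isRNNorm.norm_smul, abs_neg_one', one_mul]

lemma rnorm_sub_comm' (S : RNMod Ω μ) (v w : S.carrier) :
    S.rnorm (v - w) = S.rnorm (w - v) := by
  rw [← rnorm_neg' S (w - v), neg_sub]

/-- the basic integral functional defining the `(ε,λ)`-metric. -/
def Fint (μ : Measure Ω) (a : Ω →ₘ[μ] ℝ) : ℝ := ∫ ω, min 1 |a ω| ∂μ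

lemma Fint_integrable [IsProbabilityMeasure μ] (a : Ω →ₘ[μ] ℝ) :
    Integrable (fun ω => min 1 |a ω|) μ := by
  refine Integrable.mono' (integrable_const 1)
    ((measurable_const.min (AEEqFun.measurable a).abs).aestronglyMeasurable) ?_
  refine Filter.Eventually.of_forall fun ω => ?_
  rw [Real.norm_eq_abs, abs_of_nonneg (le_min zero_le_one (abs_nonneg _))]
  exact min_le_left _ _

lemma Fint_nonneg (a : Ω →ₘ[μ] ℝ) : 0 ≤ Fint μ a :=
  integral_nonneg fun ω => le_min zero_le_one (abs_nonneg _)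

lemma Fint_mono [IsProbabilityMeasure μ] {a b : Ω →ₘ[μ] ℝ}
    (h : ∀ᵐ ω ∂μ, |a ω| ≤ |b ω|) : Fint μ a ≤ Fint μ b := by
  refine integral_mono_ae (Fint_integrable a) (Fint_integrable b) ?_
  filter_upwards [h] with ω hω
  exact min_le_min le_rfl hω

lemma Fint_le_meas [IsProbabilityMeasure μ] {a : Ω →ₘ[μ] ℝ} {U : Set Ω}
    (hU : MeasurableSet U) (h : ∀ᵐ ω ∂μ, |a ω| ≤ U.indicator 1 ω) :
    Fint μ a ≤ (μ U).toReal := by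
  have h2 : Fint μ a ≤ ∫ ω, U.indicator (fun _ => (1:ℝ)) ω ∂μ := by
    refine integral_mono_ae (Fint_integrable a) ((integrable_const 1).indicator hU) ?_
    filter_upwards [h] with ω hω
    by_cases hm : ω ∈ U
    · simpa [Set.indicator_of_mem hm] using min_le_left 1 |a ω|
    · have := hω
      rw [Set.indicator_of_notMem hm] at this ⊢
      exact le_trans (min_le_right _ _) this
  calc Fint μ a ≤ ∫ ω, U.indicator (fun _ => (1:ℝ)) ω ∂μ := h2
    _ = (μ U).toReal := integral_indicator_one hU

lemma Fint_eq_zero' [IsProbabilityMeasure μ] {a : Ω →ₘ[μ] ℝ} (h : Fint μ a ≤ 0) : a = 0 := by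
  have h0 : Fint μ a = 0 := le_antisymm h (Fint_nonneg a)
  have h1 := (integral_eq_zero_iff_of_nonneg_ae
    (Filter.Eventually.of_forall fun ω => le_min zero_le_one (abs_nonneg _))
    (Fint_integrable a)).mp h0
  apply AEEqFun.ext
  filter_upwards [h1, AEEqFun.coeFn_zero (β := ℝ) (μ := μ)] with ω h2 h3
  rw [h3]
  by_contra hne
  have habs : 0 < |a ω| := abs_pos.mpr hne
  have : 0 < min 1 |a ω| := lt_min one_pos habs
  rw [Pi.zero_apply] at h2
  linarith

lemma ninfv_le' [IsProbabilityMeasure μ] {ξ : Ω →ₘ[μ] ℝ} {c : ℝ}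
    (h : ∀ᵐ ω ∂μ, |ξ ω| ≤ c) : NinfV μ ξ ≤ c := by
  have hcb : Filter.IsCoboundedUnder (· ≤ ·) (MeasureTheory.ae μ) (fun ω => |ξ ω|) :=
    Filter.IsCoboundedUnder.of_frequently_ge
      ((Filter.Eventually.of_forall fun ω => abs_nonneg (ξ ω)).frequently (p := fun ω => 0 ≤ |ξ ω|))
  exact Filter.limsup_le_of_le hcb h

lemma ae_le_ninfv [IsProbabilityMeasure μ] {ξ : Ω →ₘ[μ] ℝ} (h : ξ ∈ Linf μ) :
    ∀ᵐ ω ∂μ, |ξ ω| ≤ NinfV μ ξ := by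
  obtain ⟨c, hc⟩ := h
  exact ae_le_essSup ⟨c, Filter.eventually_map.mpr hc⟩

lemma ind_coe' (P : MPartition Ω) (j : ℕ) :
    ⇑(P.ind μ j) =ᵐ[μ] (P.A j).indicator (1 : Ω → ℝ) :=
  AEEqFun.coeFn_mk _ _

lemma ind_mul_self' (P : MPartition Ω) (j : ℕ) : P.ind μ j * P.ind μ j = P.ind μ j := by
  apply AEEqFun.ext
  filter_upwards [AEEqFun.coeFn_mul (P.ind μ j) (P.ind μ j), ind_coe' P j] with ω h1 h2
  rw [h1, Pi.mul_apply, h2]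
  by_cases hm : ω ∈ P.A j <;> simp [Set.indicator, hm]

lemma ind_mul_ne' (P : MPartition Ω) {i j : ℕ} (hij : i ≠ j) :
    P.ind μ i * P.ind μ j = 0 := by
  apply AEEqFun.ext
  filter_upwards [AEEqFun.coeFn_mul (P.ind μ i) (P.ind μ j), ind_coe' P i, ind_coe' P j,
    AEEqFun.coeFn_zero (β := ℝ) (μ := μ)] with ω h1 h2 h3 h4
  rw [h1, Pi.mul_apply, h2, h3, h4]
  by_cases hm : ω ∈ P.A i
  · have : ω ∉ P.A j := fun hj => by
      have := P.disj i j hij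
      exact absurd (this ▸ (⟨hm, hj⟩ : ω ∈ P.A i ∩ P.A j)) (Set.notMem_empty ω)
    simp [Set.indicator, this]
  · simp [Set.indicator, hm]

lemma sum_indicator_le_one' (P : MPartition Ω) (s : Finset ℕ) (ω : Ω) :
    ∑ j ∈ s, (P.A j).indicator (1 : Ω → ℝ) ω ≤ 1 := by
  classical
  induction s using Finset.cons_induction with
  | empty => simp
  | cons a s ha ih =>
    rw [Finset.sum_cons]
    by_cases hm : ω ∈ P.A a
    · have hz : ∀ j ∈ s, (P.A j).indicator (1 : Ω → ℝ) ω = 0 := by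
        intro j hj
        have hne : a ≠ j := fun h => ha (h ▸ hj)
        have : ω ∉ P.A j := fun hj2 => by
          have := P.disj a j hne
          exact absurd (this ▸ (⟨hm, hj2⟩ : ω ∈ P.A a ∩ P.A j)) (Set.notMem_empty ω)
        simp [Set.indicator, this]
      rw [Finset.sum_eq_zero hz]
      simp [Set.indicator, hm]
    · have : (P.A a).indicator (1 : Ω → ℝ) ω = 0 := by simp [Set.indicator, hm]
      rw [this, zero_add]; exact ih

lemma rnorm_sum_ae' (S : RNMod Ω μ) (v : ℕ → S.carrier) (s : Finset ℕ) :
    ∀ᵐ ω ∂μ, S.rnorm (∑ j ∈ s, v j) ω ≤ ∑ j ∈ s, S.rnorm (v j) ω := by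
  classical
  induction s using Finset.cons_induction with
  | empty =>
    rw [Finset.sum_empty]
    filter_upwards [AEEqFun.coeFn_zero (β := ℝ) (μ := μ)] with ω h
    rw [rnorm_zero' S, h, Finset.sum_empty, Pi.zero_apply]
  | cons a s ha ih =>
    have h1 := ae_of_le' (S.isRNNorm.norm_add_le (v a) (∑ j ∈ s, v j))
    filter_upwards [h1, AEEqFun.coeFn_add (S.rnorm (v a)) (S.rnorm (∑ j ∈ s, v j)), ih]
      with ω hω hadd hih
    rw [Finset.sum_cons, Finset.sum_cons]
    calc S.rnorm (v a + ∑ j ∈ s, v j) ω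
        ≤ (S.rnorm (v a) + S.rnorm (∑ j ∈ s, v j)) ω := hω
      _ = S.rnorm (v a) ω + S.rnorm (∑ j ∈ s, v j) ω := by rw [hadd]; rfl
      _ ≤ S.rnorm (v a) ω + ∑ j ∈ s, S.rnorm (v j) ω := by linarith

lemma exists_partition' (B : ℕ → Set Ω) (hB : ∀ j, MeasurableSet (B j)) :
    ∃ P : MPartition Ω, ∀ j, P.A j ⊆ B j ∪ (⋃ i, B i)ᶜ := by
  classical
  have hd : ∀ m k, m ≠ k → ∀ ω, ω ∈ disjointed B m → ω ∈ disjointed B k → False :=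
    fun m k h ω hm hk => Set.disjoint_left.mp (disjoint_disjointed B h) hm hk
  have hN : ∀ k, ∀ ω, ω ∈ (⋃ i, B i)ᶜ → ω ∈ disjointed B k → False :=
    fun k ω hω hk => hω (Set.mem_iUnion.mpr ⟨k, disjointed_subset B k hk⟩)
  refine ⟨⟨fun j => if j = 0 then disjointed B 0 ∪ (⋃ i, B i)ᶜ else disjointed B j,
    ?_, ?_, ?_⟩, ?_⟩
  · intro k
    by_cases hk : k = 0
    · simp only [hk, if_pos]
      exact (MeasurableSet.disjointed hB 0).union (MeasurableSet.iUnion hB).compl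
    · simp only [if_neg hk]
      exact MeasurableSet.disjointed hB k
  · intro m k hmk
    rw [Set.eq_empty_iff_forall_notMem]
    rintro ω ⟨h1, h2⟩
    by_cases hm : m = 0 <;> by_cases hk : k = 0
    · exact hmk (hm.trans hk.symm)
    · rw [if_pos hm] at h1; rw [if_neg hk] at h2
      rcases h1 with h1 | h1
      · exact hd 0 k (fun h => hk h.symm) ω h1 h2
      · exact hN k ω h1 h2
    · rw [if_neg hm] at h1; rw [if_pos hk] at h2
      rcases h2 with h2 | h2
      · exact hd m 0 hm ω h1 h2
      · exact hN m ω h2 h1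
    · rw [if_neg hm] at h1; rw [if_neg hk] at h2
      exact hd m k hmk ω h1 h2
  · rw [Set.eq_univ_iff_forall]
    intro ω
    by_cases hω : ω ∈ ⋃ i, B i
    · have : ω ∈ ⋃ i, disjointed B i := by rwa [iUnion_disjointed]
      obtain ⟨j, hj⟩ := Set.mem_iUnion.mp this
      refine Set.mem_iUnion.mpr ⟨j, ?_⟩
      by_cases hj0 : j = 0
      · subst hj0; rw [if_pos rfl]; exact Or.inl hj
      · rw [if_neg hj0]; exact hj
    · exact Set.mem_iUnion.mpr ⟨0, by rw [if_pos rfl]; exact Or.inr hω⟩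
  · intro j
    by_cases hj : j = 0
    · subst hj
      simp only [if_pos]
      exact Set.union_subset_union (disjointed_subset B 0) subset_rfl
    · simp only [if_neg hj]
      exact (disjointed_subset B j).trans Set.subset_union_left

/-- truncation at level `C`. -/
def phiC (C t : ℝ) : ℝ := if t ≤ C then 1 else C / t

lemma phiC_measurable (C : ℝ) : Measurable (phiC C) :=
  Measurable.ite (measurableSet_le measurable_id measurable_const) measurable_const
    (measurable_const.div measurable_id)

lemma phiC_nonneg {C : ℝ} (hC : 1 ≤ C) (t : ℝ) : 0 ≤ phiC C t := by
  unfold phiC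
  split_ifs with h
  · exact zero_le_one
  · exact div_nonneg (by linarith) (by push_neg at h; linarith)

lemma phiC_le_one {C : ℝ} (hC : 1 ≤ C) (t : ℝ) : phiC C t ≤ 1 := by
  unfold phiC
  split_ifs with h
  · exact le_rfl
  · push_neg at h
    exact (div_le_one (by linarith)).mpr (le_of_lt h)

lemma phiC_mul_le {C : ℝ} (hC : 1 ≤ C) {t : ℝ} (ht : 0 ≤ t) : phiC C t * t ≤ C := by
  unfold phiC
  split_ifs with h
  · rw [one_mul]; exact h
  · push_neg at h
    rw [div_mul_cancel₀ C (by linarith : t ≠ 0)]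

lemma phiC_eq_one {C t : ℝ} (h : t ≤ C) : phiC C t = 1 := if_pos h

lemma coe_mul' (a b : Ω →ₘ[μ] ℝ) : ∀ᵐ ω ∂μ, (a * b) ω = a ω * b ω := by
  filter_upwards [AEEqFun.coeFn_mul a b] with ω h
  rw [h]; rfl

lemma coe_abs_mul' (a b : Ω →ₘ[μ] ℝ) : ∀ᵐ ω ∂μ, (|a| * b) ω = |a ω| * b ω := by
  filter_upwards [AEEqFun.coeFn_mul |a| b, AEEqFun.coeFn_abs a] with ω h1 h2
  rw [h1, Pi.mul_apply, h2]

lemma coe_add' (a b : Ω →ₘ[μ] ℝ) : ∀ᵐ ω ∂μ, (a + b) ω = a ω + b ω := by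
  filter_upwards [AEEqFun.coeFn_add a b] with ω h
  rw [h]; rfl

end CCPAux


section ApproxStep

variable {Ω : Type} [MeasurableSpace Ω] {μ : Measure Ω}

lemma approx_step [IsProbabilityMeasure μ]
    {E : Type} [AddCommGroup E] [Module (Linf μ) E]
    (n : E → Ω →ₘ[μ] ℝ) (hn : IsLinfNorm μ n)
    (S : RNMod Ω μ) (T : E → S.carrier) (hext : IsL0Extension μ n S T)
    (hccp : ∀ (x : ℕ → E), (∀ k, n (x k) ≤ 1) → ∀ (P : MPartition Ω) (z : S.carrier),
      (∀ k, P.ind μ k • z = P.ind μ k • T (x k)) → ∃ y : E, n y ≤ 1 ∧ T y = z)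
    (z : S.carrier) {C : ℝ} (hC : 1 ≤ C)
    (hz : ∀ᵐ ω ∂μ, S.rnorm z ω ≤ C - 1)
    {ε : ℝ} (hε : 0 < ε) (hε1 : ε ≤ 1) :
    ∃ y : E, n y ≤ 1 ∧ ∀ᵐ ω ∂μ, S.rnorm ((AEEqFun.const Ω (1/C) : Ω →ₘ[μ] ℝ) • z - T y) ω ≤ ε := by
  classical
  obtain ⟨hcompl, hhom, hiso, hdens⟩ := hext
  have hC0 : (0:ℝ) < C := lt_of_lt_of_le one_pos hC
  -- choose an approximating sequence
  have hsel : ∀ j : ℕ, ∃ x : E, S.dist (T x) z < ε * (1/2)^(j+1) := fun j =>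
    hdens z _ (by positivity)
  choose x hx using hsel
  -- the good sets
  set B : ℕ → Set Ω := fun j => {ω | |S.rnorm (T (x j) - z) ω| < ε} with hBdef
  have hBmeas : ∀ j, MeasurableSet (B j) :=
    fun j => measurableSet_lt (AEEqFun.measurable _).abs measurable_const
  -- Markov inequality
  have hBc : ∀ j, (μ (B j)ᶜ).toReal ≤ (1/2)^(j+1) := by
    intro j
    have hmar := mul_meas_ge_le_integral_of_nonneg
      (f := fun ω => min 1 |S.rnorm (T (x j) - z) ω|)
      (Filter.Eventually.of_forall fun ω => le_min zero_le_one (abs_nonneg _))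
      (Fint_integrable _) ε
    have hsub : (B j)ᶜ ⊆ {ω | ε ≤ min 1 |S.rnorm (T (x j) - z) ω|} := by
      intro ω hω
      simp only [hBdef, Set.mem_compl_iff, Set.mem_setOf_eq, not_lt] at hω
      exact le_min hε1 hω
    have h1 : (μ (B j)ᶜ).toReal ≤
        (μ {ω | ε ≤ min 1 |S.rnorm (T (x j) - z) ω|}).toReal :=
      ENNReal.toReal_mono (measure_ne_top μ _) (measure_mono hsub)
    have h2 : ε * (μ {ω | ε ≤ min 1 |S.rnorm (T (x j) - z) ω|}).toReal
        < ε * (1/2)^(j+1) := lt_of_le_of_lt hmar (hx j)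
    have h3 := lt_of_mul_lt_mul_left h2 (le_of_lt hε)
    linarith
  -- the union of the B j covers almost everything
  have hN : μ ((⋃ i, B i)ᶜ) = 0 := by
    have h1 : ∀ j : ℕ, (μ ((⋃ i, B i)ᶜ)).toReal ≤ (1/2)^(j+1) := fun j =>
      le_trans (ENNReal.toReal_mono (measure_ne_top μ _)
        (measure_mono (Set.compl_subset_compl.mpr (Set.subset_iUnion B j)))) (hBc j)
    have h2 : Tendsto (fun j : ℕ => ((1:ℝ)/2)^(j+1)) atTop (nhds 0) :=
      (tendsto_pow_atTop_nhds_zero_of_lt_one (by norm_num : (0:ℝ) ≤ 1/2)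
        (by norm_num : (1:ℝ)/2 < 1)).comp (tendsto_add_atTop_nat 1)
    have h3 : (μ ((⋃ i, B i)ᶜ)).toReal ≤ 0 := ge_of_tendsto' h2 h1
    have h4 : (μ ((⋃ i, B i)ᶜ)).toReal = 0 := le_antisymm h3 ENNReal.toReal_nonneg
    exact ((ENNReal.toReal_eq_zero_iff _).mp h4).resolve_right (measure_ne_top μ _)
  obtain ⟨P, hPB⟩ := exists_partition' B hBmeas
  have hPA : ∀ j, ∀ᵐ ω ∂μ, ω ∈ P.A j → ω ∈ B j := by
    intro j
    have h1 : ∀ᵐ ω ∂μ, ω ∉ (⋃ i, B i)ᶜ := measure_eq_zero_iff_ae_notMem.mp hN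
    filter_upwards [h1] with ω hω hA
    rcases hPB j hA with h | h
    · exact h
    · exact absurd h hω
  -- bound for n (x j) on B j
  have htC : ∀ j, ∀ᵐ ω ∂μ, ω ∈ B j → (n (x j)) ω ≤ C := by
    intro j
    have hsplit : T (x j) = (T (x j) - z) + z := (sub_add_cancel _ _).symm
    have h1 : S.rnorm (T (x j)) ≤ S.rnorm (T (x j) - z) + S.rnorm z := by
      nth_rewrite 1 [hsplit]
      exact S.isRNNorm.norm_add_le _ _
    have h3 : S.rnorm (T (x j)) = n (x j) := hiso (x j)
    rw [h3] at h1
    filter_upwards [ae_of_le' h1, coe_add' (S.rnorm (T (x j) - z)) (S.rnorm z), hz]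
      with ω e1 e2 e3 hB
    rw [e2] at e1
    simp only [hBdef, Set.mem_setOf_eq] at hB
    have h4 : S.rnorm (T (x j) - z) ω ≤ |S.rnorm (T (x j) - z) ω| := le_abs_self _
    linarith
  -- the truncation scalars
  have hxi_meas : ∀ j, AEStronglyMeasurable (fun ω => phiC C ((n (x j)) ω)) μ := fun j =>
    ((phiC_measurable C).comp (AEEqFun.measurable (n (x j)))).aestronglyMeasurable
  set ξ : ℕ → Linf μ := fun j =>
    ⟨AEEqFun.mk (fun ω => phiC C ((n (x j)) ω)) (hxi_meas j), 1, by
      filter_upwards [AEEqFun.coeFn_mk (fun ω => phiC C ((n (x j)) ω)) (hxi_meas j)] with ω h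
      rw [h, abs_of_nonneg (phiC_nonneg hC _)]
      exact phiC_le_one hC _⟩ with hξdef
  have hξcoe : ∀ j, ⇑((ξ j : Linf μ) : Ω →ₘ[μ] ℝ) =ᵐ[μ] fun ω => phiC C ((n (x j)) ω) :=
    fun j => AEEqFun.coeFn_mk _ _
  -- the concatenands
  set w : ℕ → E := fun j => LinfConst μ (1/C) • (ξ j • x j) with hwdef
  have hLc : ((LinfConst μ (1/C) : Linf μ) : Ω →ₘ[μ] ℝ) = AEEqFun.const Ω (1/C) := rfl
  have hTw : ∀ j, T (w j) =
      (AEEqFun.const Ω (1/C) : Ω →ₘ[μ] ℝ) • (((ξ j : Linf μ) : Ω →ₘ[μ] ℝ) • T (x j)) := by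
    intro j
    simp only [hwdef]
    rw [hhom.2, hhom.2, hLc]
  have hw1 : ∀ j, n (w j) ≤ 1 := by
    intro j
    have he : n (w j) = |(AEEqFun.const Ω (1/C) : Ω →ₘ[μ] ℝ)| *
        (|((ξ j : Linf μ) : Ω →ₘ[μ] ℝ)| * n (x j)) := by
      simp only [hwdef]
      rw [hn.norm_smul, hn.norm_smul, hLc]
    rw [he]
    apply le_of_ae'
    filter_upwards [coe_abs_mul' (AEEqFun.const Ω (1/C) : Ω →ₘ[μ] ℝ)
        (|((ξ j : Linf μ) : Ω →ₘ[μ] ℝ)| * n (x j)),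
      coe_abs_mul' (((ξ j : Linf μ) : Ω →ₘ[μ] ℝ)) (n (x j)),
      hξcoe j, nonneg_ae' (hn.nonneg (x j)),
      AEEqFun.coeFn_one (β := ℝ) (μ := μ),
      AEEqFun.coeFn_const (α := Ω) (μ := μ) (1/C)] with ω e1 e2 e3 e4 e5 e6
    rw [e5, Pi.one_apply, e1, e2, e3, e6]
    have h1 : phiC C ((n (x j)) ω) * (n (x j)) ω ≤ C := phiC_mul_le hC e4
    have h2 : |phiC C ((n (x j)) ω)| = phiC C ((n (x j)) ω) :=
      abs_of_nonneg (phiC_nonneg hC _)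
    rw [h2]
    have h3 : |Function.const Ω (1/C) ω| = 1/C :=
      abs_of_nonneg (div_nonneg zero_le_one hC0.le)
    rw [h3]
    calc (1/C) * (phiC C ((n (x j)) ω) * (n (x j)) ω) ≤ (1/C) * C :=
          mul_le_mul_of_nonneg_left h1 (div_nonneg zero_le_one hC0.le)
      _ = 1 := one_div_mul_cancel hC0.ne'
  -- the cut-off identity
  have hcut : ∀ j, P.ind μ j * ((ξ j : Linf μ) : Ω →ₘ[μ] ℝ) = P.ind μ j := by
    intro j
    apply AEEqFun.ext
    filter_upwards [coe_mul' (P.ind μ j) (((ξ j : Linf μ) : Ω →ₘ[μ] ℝ)), ind_coe' P j,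
      hξcoe j, hPA j, htC j] with ω e1 e2 e3 e4 e5
    rw [e1, e2, e3]
    by_cases hm : ω ∈ P.A j
    · rw [Set.indicator_of_mem hm, phiC_eq_one (e5 (e4 hm))]
      simp
    · rw [Set.indicator_of_notMem hm]
      simp
  -- the key algebraic identity
  have hkey : ∀ j, P.ind μ j • ((AEEqFun.const Ω (1/C) : Ω →ₘ[μ] ℝ) • z - T (w j))
      = (AEEqFun.const Ω (1/C) : Ω →ₘ[μ] ℝ) • (P.ind μ j • (z - T (x j))) := by
    intro j
    rw [hTw j]
    simp only [smul_sub, ← mul_smul]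
    rw [mul_left_comm (P.ind μ j) (AEEqFun.const Ω (1/C) : Ω →ₘ[μ] ℝ), hcut j,
      mul_comm (P.ind μ j) (AEEqFun.const Ω (1/C) : Ω →ₘ[μ] ℝ)]
  -- pointwise bound on each piece
  have hrj : ∀ j, ∀ᵐ ω ∂μ,
      ω ∈ P.A j → S.rnorm ((AEEqFun.const Ω (1/C) : Ω →ₘ[μ] ℝ) • z - T (w j)) ω ≤ ε := by
    intro j
    have hsc : S.rnorm (z - T (x j)) = S.rnorm (T (x j) - z) := rnorm_sub_comm' S _ _
    have heq2 : |P.ind μ j| * S.rnorm ((AEEqFun.const Ω (1/C) : Ω →ₘ[μ] ℝ) • z - T (w j))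
        = |(AEEqFun.const Ω (1/C) : Ω →ₘ[μ] ℝ)| * (|P.ind μ j| * S.rnorm (T (x j) - z)) := by
      rw [← S.isRNNorm.norm_smul, hkey j, S.isRNNorm.norm_smul, S.isRNNorm.norm_smul, hsc]
    filter_upwards [coe_abs_mul' (P.ind μ j)
        (S.rnorm ((AEEqFun.const Ω (1/C) : Ω →ₘ[μ] ℝ) • z - T (w j))),
      coe_abs_mul' (AEEqFun.const Ω (1/C) : Ω →ₘ[μ] ℝ) (|P.ind μ j| * S.rnorm (T (x j) - z)),
      coe_abs_mul' (P.ind μ j) (S.rnorm (T (x j) - z)),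
      ind_coe' P j, hPA j,
      AEEqFun.coeFn_const (α := Ω) (μ := μ) (1/C)] with ω e1 e2 e3 e4 e5 e6 hA
    have e0 : (|P.ind μ j| * S.rnorm ((AEEqFun.const Ω (1/C) : Ω →ₘ[μ] ℝ) • z - T (w j))) ω
        = (|(AEEqFun.const Ω (1/C) : Ω →ₘ[μ] ℝ)| * (|P.ind μ j| * S.rnorm (T (x j) - z))) ω := by
      rw [heq2]
    rw [e1, e2, e3, e4, Set.indicator_of_mem hA, Pi.one_apply, abs_one, one_mul, one_mul, e6]
      at e0
    have hB : |S.rnorm (T (x j) - z) ω| < ε := by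
      have := e5 hA
      simpa [hBdef, Set.mem_setOf_eq] using this
    have h4 : S.rnorm (T (x j) - z) ω ≤ |S.rnorm (T (x j) - z) ω| := le_abs_self _
    have h5 : |Function.const Ω (1/C) ω| = 1/C :=
      abs_of_nonneg (div_nonneg zero_le_one hC0.le)
    rw [h5] at e0
    have h6 : (1:ℝ)/C ≤ 1 := by
      rw [div_le_one hC0]; exact hC
    rw [e0]
    calc (1/C) * S.rnorm (T (x j) - z) ω ≤ (1/C) * ε := by
          apply mul_le_mul_of_nonneg_left _ (div_nonneg zero_le_one hC0.le)
          linarith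
      _ ≤ 1 * ε := mul_le_mul_of_nonneg_right h6 (le_of_lt hε)
      _ = ε := one_mul ε
  -- the partial sums
  set s : ℕ → S.carrier := fun m => ∑ j ∈ Finset.range m, P.ind μ j • T (w j) with hsdef
  set U : ℕ → Set Ω := fun k => ⋃ (j : ℕ) (_ : k ≤ j), P.A j with hUdef
  have hUmeas : ∀ k, MeasurableSet (U k) := fun k =>
    MeasurableSet.iUnion fun j => MeasurableSet.iUnion fun _ => P.meas j
  have hUanti : Antitone U := by
    intro k l hkl ω hω
    simp only [hUdef, Set.mem_iUnion] at hω ⊢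
    obtain ⟨j, hj1, hj2⟩ := hω
    exact ⟨j, le_trans hkl hj1, hj2⟩
  have hUempty : (⋂ k, U k) = ∅ := by
    rw [Set.eq_empty_iff_forall_notMem]
    intro ω hω
    simp only [hUdef, Set.mem_iInter, Set.mem_iUnion] at hω
    obtain ⟨j0, _, hA0⟩ := hω 0
    obtain ⟨j1, hj1, hA1⟩ := hω (j0+1)
    have hne : j0 ≠ j1 := by omega
    exact absurd (P.disj j0 j1 hne ▸ (⟨hA0, hA1⟩ : ω ∈ P.A j0 ∩ P.A j1))
      (Set.notMem_empty ω)
  have hUtend : Tendsto (fun k => (μ (U k)).toReal) atTop (nhds 0) := by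
    have h1 := tendsto_measure_iInter_atTop
      (fun k => (hUmeas k).nullMeasurableSet) hUanti ⟨0, measure_ne_top μ _⟩
    rw [hUempty] at h1
    simp only [measure_empty] at h1
    have h2 := (ENNReal.tendsto_toReal (by simp : (0:ENNReal) ≠ ⊤)).comp h1
    simpa [Function.comp_def] using h2
  -- bound on pieces of the partial sums
  have hterm : ∀ᵐ ω ∂μ, ∀ j, S.rnorm (P.ind μ j • T (w j)) ω ≤
      (P.A j).indicator (1 : Ω → ℝ) ω := by
    rw [ae_all_iff]
    intro j
    have he : S.rnorm (P.ind μ j • T (w j)) = |P.ind μ j| * n (w j) := by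
      rw [S.isRNNorm.norm_smul, hiso]
    rw [he]
    filter_upwards [coe_abs_mul' (P.ind μ j) (n (w j)), ind_coe' P j,
      le_one_ae' (hw1 j), nonneg_ae' (hn.nonneg (w j))] with ω e1 e2 e3 e4
    rw [e1, e2]
    by_cases hm : ω ∈ P.A j
    · simp only [Set.indicator_of_mem hm, Pi.one_apply, abs_one, one_mul]
      exact e3
    · simp [Set.indicator_of_notMem hm]
  have hsdiffa : ∀ k m, k ≤ m → ∀ᵐ ω ∂μ, |S.rnorm (s m - s k) ω| ≤
      (U k).indicator (1 : Ω → ℝ) ω := by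
    intro k m hkm
    have hsum : s m - s k = ∑ j ∈ Finset.Ico k m, P.ind μ j • T (w j) := by
      simp only [hsdef]
      exact (Finset.sum_Ico_eq_sub _ hkm).symm
    rw [hsum]
    filter_upwards [rnorm_sum_ae' S (fun j => P.ind μ j • T (w j)) (Finset.Ico k m), hterm,
      nonneg_ae' (S.isRNNorm.nonneg (∑ j ∈ Finset.Ico k m, P.ind μ j • T (w j)))]
      with ω e1 e2 e3
    rw [abs_of_nonneg e3]
    refine le_trans e1 ?_
    by_cases hU : ω ∈ U k
    · rw [Set.indicator_of_mem hU, Pi.one_apply]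
      calc ∑ j ∈ Finset.Ico k m, S.rnorm (P.ind μ j • T (w j)) ω
          ≤ ∑ j ∈ Finset.Ico k m, (P.A j).indicator (1 : Ω → ℝ) ω :=
            Finset.sum_le_sum (fun j _ => e2 j)
        _ ≤ 1 := sum_indicator_le_one' P _ ω
    · rw [Set.indicator_of_notMem hU]
      have hz2 : ∀ j ∈ Finset.Ico k m, S.rnorm (P.ind μ j • T (w j)) ω ≤ 0 := by
        intro j hj
        refine le_trans (e2 j) ?_
        have hnm : ω ∉ P.A j := by
          intro hA
          apply hU
          simp only [hUdef, Set.mem_iUnion]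
          exact ⟨j, (Finset.mem_Ico.mp hj).1, hA⟩
        simp [Set.indicator_of_notMem hnm]
      calc ∑ j ∈ Finset.Ico k m, S.rnorm (P.ind μ j • T (w j)) ω
          ≤ ∑ _j ∈ Finset.Ico k m, (0:ℝ) := Finset.sum_le_sum hz2
        _ = 0 := by simp
  have hdist_le : ∀ N k m, N ≤ k → N ≤ m → S.dist (s m) (s k) ≤ (μ (U N)).toReal := by
    intro N k m hNk hNm
    have hd : S.dist (s m) (s k) = Fint μ (S.rnorm (s m - s k)) := rfl
    rcases le_total k m with h | h
    · calc S.dist (s m) (s k) ≤ (μ (U k)).toReal := by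
            rw [hd]; exact Fint_le_meas (hUmeas k) (hsdiffa k m h)
        _ ≤ (μ (U N)).toReal :=
            ENNReal.toReal_mono (measure_ne_top μ _) (measure_mono (hUanti hNk))
    · have hsc : S.rnorm (s m - s k) = S.rnorm (s k - s m) := rnorm_sub_comm' S _ _
      calc S.dist (s m) (s k) ≤ (μ (U m)).toReal := by
            rw [hd, hsc]; exact Fint_le_meas (hUmeas m) (hsdiffa m k h)
        _ ≤ (μ (U N)).toReal :=
            ENNReal.toReal_mono (measure_ne_top μ _) (measure_mono (hUanti hNm))
  have hcauchy : dCauchy S.dist s := by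
    intro ε' hε'
    obtain ⟨N, hNp⟩ := Filter.eventually_atTop.mp ((tendsto_order.1 hUtend).2 ε' hε')
    exact ⟨N, fun m hm k hk => lt_of_le_of_lt (hdist_le N k m hk hm) (hNp N le_rfl)⟩
  obtain ⟨zt, hzt⟩ := hcompl s hcauchy
  -- the limit is the exact concatenation
  have heqj : ∀ j, P.ind μ j • zt = P.ind μ j • T (w j) := by
    intro j
    have hsm : ∀ m, j < m → P.ind μ j • s m = P.ind μ j • T (w j) := by
      intro m hjm
      simp only [hsdef]
      rw [Finset.smul_sum]
      rw [Finset.sum_eq_single j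
        (fun i _ hij => by rw [← mul_smul, ind_mul_ne' P (Ne.symm hij), zero_smul])
        (fun hj => absurd (Finset.mem_range.mpr hjm) hj)]
      rw [← mul_smul, ind_mul_self' P j]
    have hDle : ∀ m, j < m →
        Fint μ (S.rnorm (P.ind μ j • zt - P.ind μ j • T (w j))) ≤ S.dist (s m) zt := by
      intro m hjm
      rw [← hsm m hjm, ← smul_sub]
      have hd : S.dist (s m) zt = Fint μ (S.rnorm (s m - zt)) := rfl
      rw [hd]
      apply Fint_mono
      have he : S.rnorm (P.ind μ j • (zt - s m)) = |P.ind μ j| * S.rnorm (zt - s m) :=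
        S.isRNNorm.norm_smul _ _
      have hsc : S.rnorm (s m - zt) = S.rnorm (zt - s m) := rnorm_sub_comm' S _ _
      rw [he, hsc]
      filter_upwards [coe_abs_mul' (P.ind μ j) (S.rnorm (zt - s m)), ind_coe' P j,
        nonneg_ae' (S.isRNNorm.nonneg (zt - s m))] with ω e1 e2 e3
      rw [e1, e2]
      by_cases hm : ω ∈ P.A j
      · simp only [Set.indicator_of_mem hm, Pi.one_apply, abs_one, one_mul]
        exact le_rfl
      · simp only [Set.indicator_of_notMem hm, abs_zero, zero_mul]
        exact abs_nonneg _
    have hD0 : Fint μ (S.rnorm (P.ind μ j • zt - P.ind μ j • T (w j))) ≤ 0 := by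
      refine ge_of_tendsto hzt ?_
      exact Filter.eventually_atTop.mpr ⟨j+1, fun m hm => hDle m (by omega)⟩
    have h1 := Fint_eq_zero' hD0
    have h2 := (S.isRNNorm.eq_zero_iff _).mp h1
    exact sub_eq_zero.mp h2
  obtain ⟨y, hy1, hyT⟩ := hccp w hw1 P zt heqj
  refine ⟨y, hy1, ?_⟩
  rw [hyT]
  -- final bound
  have hfin : ∀ j, ∀ᵐ ω ∂μ, ω ∈ P.A j →
      S.rnorm ((AEEqFun.const Ω (1/C) : Ω →ₘ[μ] ℝ) • z - zt) ω ≤ ε := by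
    intro j
    have he1 : P.ind μ j • ((AEEqFun.const Ω (1/C) : Ω →ₘ[μ] ℝ) • z - zt)
        = P.ind μ j • ((AEEqFun.const Ω (1/C) : Ω →ₘ[μ] ℝ) • z - T (w j)) := by
      rw [smul_sub, smul_sub, heqj j]
    have he2 : |P.ind μ j| * S.rnorm ((AEEqFun.const Ω (1/C) : Ω →ₘ[μ] ℝ) • z - zt)
        = |P.ind μ j| * S.rnorm ((AEEqFun.const Ω (1/C) : Ω →ₘ[μ] ℝ) • z - T (w j)) := by
      rw [← S.isRNNorm.norm_smul, ← S.isRNNorm.norm_smul, he1]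
    filter_upwards [coe_abs_mul' (P.ind μ j) (S.rnorm ((AEEqFun.const Ω (1/C) : Ω →ₘ[μ] ℝ) • z - zt)),
      coe_abs_mul' (P.ind μ j) (S.rnorm ((AEEqFun.const Ω (1/C) : Ω →ₘ[μ] ℝ) • z - T (w j))),
      ind_coe' P j, hrj j] with ω e1 e2 e3 e4 hA
    have e0 : (|P.ind μ j| * S.rnorm ((AEEqFun.const Ω (1/C) : Ω →ₘ[μ] ℝ) • z - zt)) ω
        = (|P.ind μ j| * S.rnorm ((AEEqFun.const Ω (1/C) : Ω →ₘ[μ] ℝ) • z - T (w j))) ω := by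
      rw [he2]
    rw [e1, e2, e3, Set.indicator_of_mem hA, Pi.one_apply, abs_one, one_mul, one_mul] at e0
    rw [e0]
    exact e4 hA
  filter_upwards [ae_all_iff.mpr hfin] with ω hω
  have hcov : ω ∈ ⋃ j, P.A j := by rw [P.cover]; trivial
  obtain ⟨j, hj⟩ := Set.mem_iUnion.mp hcov
  exact hω j hj

end ApproxStep

/-- if `(E,‖·‖)` is a complete `L^∞`-normed module whose unit ball has
the countable concatenation property, then `E = L^∞(E₀)`, i.e. the image of `E` in
its `L⁰`-extension `E₀` is exactly the set of elements with essentially bounded norm. -/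
theorem complete_ccp_eq_LinfPart
    {Ω : Type} [MeasurableSpace Ω] (μ : Measure Ω) [IsProbabilityMeasure μ]
    {E : Type} [AddCommGroup E] [Module (Linf μ) E]
    (n : E → Ω →ₘ[μ] ℝ) (hn : IsLinfNorm μ n)
    (hcomp : dComplete (fun x y : E => NinfV μ (n (x - y))))
    (S : RNMod Ω μ) (T : E → S.carrier) (hext : IsL0Extension μ n S T)
    (hccp : ∀ (x : ℕ → E), (∀ k, n (x k) ≤ 1) → ∀ (P : MPartition Ω) (z : S.carrier),
      (∀ k, P.ind μ k • z = P.ind μ k • T (x k)) → ∃ y : E, n y ≤ 1 ∧ T y = z) :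
    Set.range T = LinfPart μ S.rnorm := by
  apply Set.Subset.antisymm
  · rintro v ⟨x, rfl⟩
    show S.rnorm (T x) ∈ Linf μ
    rw [hext.2.2.1]
    exact hn.mem_Linf x
  · intro z hzmem
    obtain ⟨c, hc⟩ := hzmem
    set C : ℝ := max c 0 + 1 with hCdef
    have hC : 1 ≤ C := by
      simp only [hCdef]
      linarith [le_max_right c 0]
    have hC0 : (0:ℝ) < C := lt_of_lt_of_le one_pos hC
    have hzb : ∀ᵐ ω ∂μ, S.rnorm z ω ≤ C - 1 := by
      filter_upwards [hc] with ω hω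
      have h1 : S.rnorm z ω ≤ |S.rnorm z ω| := le_abs_self _
      have h2 : c ≤ max c 0 := le_max_left c 0
      simp only [hCdef]
      linarith
    have hsel : ∀ k : ℕ, ∃ y : E, n y ≤ 1 ∧ ∀ᵐ ω ∂μ,
        S.rnorm ((AEEqFun.const Ω (1/C) : Ω →ₘ[μ] ℝ) • z - T y) ω ≤ (1/2)^k := fun k =>
      approx_step n hn S T hext hccp z hC hzb (by positivity)
        (pow_le_one₀ (by norm_num) (by norm_num))
    choose y hy1 hy2 using hsel
    set cz : S.carrier := (AEEqFun.const Ω (1/C) : Ω →ₘ[μ] ℝ) • z with hczdef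
    have hhom := hext.2.1
    have hiso := hext.2.2.1
    have hTsub : ∀ a b : E, T (a - b) = T a - T b := by
      intro a b
      have h := hhom.1 (a - b) b
      rw [sub_add_cancel] at h
      exact eq_sub_of_add_eq h.symm
    have hnsub : ∀ a b : E, n (a - b) = n (b - a) := by
      intro a b
      rw [← hiso, ← hiso, hTsub, hTsub, rnorm_sub_comm']
    have hb : ∀ m k : ℕ, ∀ᵐ ω ∂μ, |n (y m - y k) ω| ≤ (1/2)^m + (1/2)^k := by
      intro m k
      have he : n (y m - y k) = S.rnorm (T (y m) - T (y k)) := by rw [← hiso, hTsub]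
      have h1 := S.isRNNorm.norm_add_le (T (y m) - cz) (cz - T (y k))
      rw [sub_add_sub_cancel] at h1
      have h2 : S.rnorm (T (y m) - cz) = S.rnorm (cz - T (y m)) := rnorm_sub_comm' S _ _
      rw [h2] at h1
      rw [he]
      filter_upwards [ae_of_le' h1,
        coe_add' (S.rnorm (cz - T (y m))) (S.rnorm (cz - T (y k))),
        hy2 m, hy2 k, nonneg_ae' (S.isRNNorm.nonneg (T (y m) - T (y k)))]
        with ω e1 e2 e3 e4 e5
      rw [abs_of_nonneg e5]
      rw [e2] at e1
      linarith
    have hcau : dCauchy (fun a b : E => NinfV μ (n (a - b))) y := by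
      intro ε hε
      obtain ⟨N, hN⟩ : ∃ N : ℕ, ((1:ℝ)/2)^N < ε/2 :=
        exists_pow_lt_of_lt_one (by linarith) (by norm_num)
      refine ⟨N, fun m hm k hk => ?_⟩
      show NinfV μ (n (y m - y k)) < ε
      have h1 : NinfV μ (n (y m - y k)) ≤ (1/2)^m + (1/2)^k := ninfv_le' (hb m k)
      have h2 : ((1:ℝ)/2)^m ≤ (1/2)^N := pow_le_pow_of_le_one (by norm_num) (by norm_num) hm
      have h3 : ((1:ℝ)/2)^k ≤ (1/2)^N := pow_le_pow_of_le_one (by norm_num) (by norm_num) hk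
      linarith
    obtain ⟨yl, hyl⟩ := hcomp y hcau
    have hTyl : T yl = cz := by
      have hq : ∀ k : ℕ, ∀ᵐ ω ∂μ,
          S.rnorm (T yl - cz) ω ≤ NinfV μ (n (y k - yl)) + (1/2)^k := by
        intro k
        have h1 := S.isRNNorm.norm_add_le (T yl - T (y k)) (T (y k) - cz)
        rw [sub_add_sub_cancel] at h1
        have h2 : S.rnorm (T yl - T (y k)) = n (yl - y k) := by rw [← hTsub, hiso]
        have h3 : S.rnorm (T (y k) - cz) = S.rnorm (cz - T (y k)) := rnorm_sub_comm' S _ _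
        rw [h2, h3, hnsub yl (y k)] at h1
        have h5 : ∀ᵐ ω ∂μ, |n (y k - yl) ω| ≤ NinfV μ (n (y k - yl)) :=
          ae_le_ninfv (hn.mem_Linf _)
        filter_upwards [ae_of_le' h1,
          coe_add' (n (y k - yl)) (S.rnorm (cz - T (y k))), h5, hy2 k]
          with ω e1 e2 e3 e4
        rw [e2] at e1
        have h6 : n (y k - yl) ω ≤ |n (y k - yl) ω| := le_abs_self _
        linarith
      have hq2 := ae_all_iff.mpr hq
      have htend : Tendsto (fun k : ℕ => NinfV μ (n (y k - yl)) + (1/2)^k) atTop (nhds 0) := by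
        have h := Filter.Tendsto.add hyl
          (tendsto_pow_atTop_nhds_zero_of_lt_one (by norm_num : (0:ℝ) ≤ 1/2)
            (by norm_num : (1:ℝ)/2 < 1))
        simpa using h
      have hzero : S.rnorm (T yl - cz) = 0 := by
        apply AEEqFun.ext
        filter_upwards [hq2, nonneg_ae' (S.isRNNorm.nonneg (T yl - cz)),
          AEEqFun.coeFn_zero (β := ℝ) (μ := μ)] with ω e1 e2 e3
        rw [e3, Pi.zero_apply]
        have h7 : S.rnorm (T yl - cz) ω ≤ 0 := ge_of_tendsto' htend e1
        linarith
      have h8 := (S.isRNNorm.eq_zero_iff _).mp hzero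
      exact sub_eq_zero.mp h8
    have hCC : (AEEqFun.const Ω C : Ω →ₘ[μ] ℝ) * (AEEqFun.const Ω (1/C) : Ω →ₘ[μ] ℝ) = 1 := by
      apply AEEqFun.ext
      filter_upwards [coe_mul' (AEEqFun.const Ω C : Ω →ₘ[μ] ℝ)
          (AEEqFun.const Ω (1/C) : Ω →ₘ[μ] ℝ),
        AEEqFun.coeFn_const (α := Ω) (μ := μ) C,
        AEEqFun.coeFn_const (α := Ω) (μ := μ) (1/C),
        AEEqFun.coeFn_one (β := ℝ) (μ := μ)] with ω e1 e2 e3 e4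
      rw [e1, e2, e3, e4, Pi.one_apply]
      show C * (1/C) = 1
      field_simp
    refine ⟨LinfConst μ C • yl, ?_⟩
    have h1 : T (LinfConst μ C • yl) =
        ((LinfConst μ C : Linf μ) : Ω →ₘ[μ] ℝ) • T yl := hhom.2 _ _
    have hLc : ((LinfConst μ C : Linf μ) : Ω →ₘ[μ] ℝ) = (AEEqFun.const Ω C : Ω →ₘ[μ] ℝ) := rfl
    rw [h1, hLc, hTyl, hczdef, smul_smul, hCC, one_smul]

end
end

section
/- Let (E, ‖·‖) be an L^∞-normed module and E′ its dual L^∞-normed module. For any sequence {f_n} in the unit ball U(E′) and any countable measurable partition {A_n} of Ω, the map f : E → L^∞ defined by f(x) = Σ_n Ĩ_{A_n} f_n(x) is a well-defined element of U(E′). Hence U(E′) has the countable concatenation property. -/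
open MeasureTheory Filter
noncomputable section

variable {Ω : Type} [MeasurableSpace Ω] {μ : Measure Ω}

/-- the index of the partition member containing `ω`. -/
def pidx (P : MPartition Ω) (ω : Ω) : ℕ := sInf {k | ω ∈ P.A k}

lemma pidx_eq (P : MPartition Ω) {k : ℕ} {ω : Ω} (h : ω ∈ P.A k) : pidx P ω = k := by
  have huniq : {m | ω ∈ P.A m} = {k} := by
    ext m
    simp only [Set.mem_setOf_eq, Set.mem_singleton_iff]
    constructor
    · intro hm
      by_contra hne
      have := P.disj m k hne
      have : ω ∈ P.A m ∩ P.A k := ⟨hm, h⟩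
      rw [P.disj m k hne] at this
      exact this
    · rintro rfl; exact h
  simp [pidx, huniq]

lemma pidx_mem (P : MPartition Ω) (ω : Ω) : ω ∈ P.A (pidx P ω) := by
  have : ω ∈ ⋃ k, P.A k := by rw [P.cover]; trivial
  obtain ⟨k, hk⟩ := Set.mem_iUnion.mp this
  rw [pidx_eq P hk]; exact hk

/-- a strongly measurable representative of the concatenation of a sequence of
random variables along a partition. -/
def concatFun (μ : Measure Ω) (P : MPartition Ω) (ξ : ℕ → Ω →ₘ[μ] ℝ) : Ω → ℝ :=
  fun ω => (ξ (pidx P ω)).aestronglyMeasurable.mk _ ω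

lemma concatFun_measurable (μ : Measure Ω) (P : MPartition Ω) (ξ : ℕ → Ω →ₘ[μ] ℝ) :
    Measurable (concatFun μ P ξ) := by
  intro s hs
  have : concatFun μ P ξ ⁻¹' s =
      ⋃ k, P.A k ∩ ((ξ k).aestronglyMeasurable.mk _ ⁻¹' s) := by
    ext ω
    constructor
    · intro hω
      refine Set.mem_iUnion.mpr ⟨pidx P ω, pidx_mem P ω, hω⟩
    · intro hω
      obtain ⟨k, hk, hs'⟩ := Set.mem_iUnion.mp hω
      have : pidx P ω = k := pidx_eq P hk
      simpa [Set.mem_preimage, concatFun, this] using hs'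
  rw [this]
  exact MeasurableSet.iUnion fun k => (P.meas k).inter
    (((ξ k).aestronglyMeasurable.stronglyMeasurable_mk.measurable) hs)

/-- the concatenation `Σ_k Ĩ_{A_k} ξ_k` as an element of `L⁰`. -/
def concatL0 (μ : Measure Ω) (P : MPartition Ω) (ξ : ℕ → Ω →ₘ[μ] ℝ) : Ω →ₘ[μ] ℝ :=
  AEEqFun.mk (concatFun μ P ξ) (concatFun_measurable μ P ξ).aestronglyMeasurable

lemma concatL0_ae (μ : Measure Ω) (P : MPartition Ω) (ξ : ℕ → Ω →ₘ[μ] ℝ) :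
    ∀ᵐ ω ∂μ, ∀ k, ω ∈ P.A k → concatL0 μ P ξ ω = ξ k ω := by
  rw [MeasureTheory.ae_all_iff]
  intro k
  filter_upwards [AEEqFun.coeFn_mk (concatFun μ P ξ)
      (concatFun_measurable μ P ξ).aestronglyMeasurable,
    (ξ k).aestronglyMeasurable.ae_eq_mk] with ω h1 h2 hk
  rw [show concatL0 μ P ξ = AEEqFun.mk (concatFun μ P ξ)
      (concatFun_measurable μ P ξ).aestronglyMeasurable from rfl, h1]
  show (ξ (pidx P ω)).aestronglyMeasurable.mk _ ω = ξ k ω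
  rw [pidx_eq P hk, ← h2]

/-- the unit ball of the dual `E′` of an `L^∞`-normed module has the
countable concatenation property: for `{f_n} ⊆ U(E′)` and a countable measurable
partition `{A_n}`, the concatenation `f(x) = Σ_n Ĩ_{A_n} f_n(x)` is a well-defined
element of `U(E′)`. -/
theorem dual_unit_ball_ccp
    {Ω : Type} [MeasurableSpace Ω] (μ : Measure Ω) [IsProbabilityMeasure μ]
    {E : Type} [AddCommGroup E] [Module (Linf μ) E]
    (n : E → Ω →ₘ[μ] ℝ) (hn : IsLinfNorm μ n)
    (f : ℕ → E → Ω →ₘ[μ] ℝ) (hf : ∀ k, IsLinfDual μ n (f k))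
    (hball : ∀ k, ∀ x : E, n x ≤ 1 → |f k x| ≤ 1)
    (P : MPartition Ω) :
    ∃ g : E → Ω →ₘ[μ] ℝ,
      (∀ (x : E) (k : ℕ), P.ind μ k * g x = P.ind μ k * f k x) ∧
      IsLinfDual μ n g ∧
      (∀ x : E, n x ≤ 1 → |g x| ≤ 1) := by
  classical
  set g : E → Ω →ₘ[μ] ℝ := fun x => concatL0 μ P (fun k => f k x) with hg
  have hglue : ∀ x : E, ∀ᵐ ω ∂μ, ∀ k, ω ∈ P.A k → g x ω = f k x ω :=
    fun x => concatL0_ae μ P (fun k => f k x)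
  -- pointwise form of the unit-ball hypothesis
  have hfle : ∀ (k : ℕ) (x : E), n x ≤ 1 → ∀ᵐ ω ∂μ, |(f k x) ω| ≤ 1 := by
    intro k x hx
    filter_upwards [AEEqFun.coeFn_le.mpr (hball k x hx), AEEqFun.coeFn_abs (f k x),
      AEEqFun.coeFn_one (β := ℝ) (μ := μ)] with ω h1 h2 h3
    calc |f k x ω| = |f k x| ω := h2.symm
      _ ≤ (1 : Ω →ₘ[μ] ℝ) ω := h1
      _ = 1 := by rw [h3]; rfl
  -- key uniform bound: if `n x ≤ C` a.e. then `|f k x| ≤ C` a.e. for every `k`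
  have hkey : ∀ (x : E) (C : ℝ), 0 < C → (∀ᵐ ω ∂μ, (n x) ω ≤ C) →
      ∀ k, ∀ᵐ ω ∂μ, |(f k x) ω| ≤ C := by
    intro x C hC hxC k
    set ξ : Linf μ := LinfConst μ C⁻¹ with hξ
    have hcoe : ((ξ : Ω →ₘ[μ] ℝ)) = AEEqFun.const Ω C⁻¹ := rfl
    have hnle : n (ξ • x) ≤ 1 := by
      rw [hn.norm_smul, ← AEEqFun.coeFn_le]
      filter_upwards [AEEqFun.coeFn_mul |(ξ : Ω →ₘ[μ] ℝ)| (n x),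
        AEEqFun.coeFn_abs (ξ : Ω →ₘ[μ] ℝ),
        AEEqFun.coeFn_const (α := Ω) (μ := μ) (C⁻¹ : ℝ),
        AEEqFun.coeFn_one (β := ℝ) (μ := μ), hxC,
        AEEqFun.coeFn_le.mpr (hn.nonneg x),
        AEEqFun.coeFn_zero (β := ℝ) (μ := μ)] with ω h1 h2 h3 h4 h5 h6 h7
      rw [h1, Pi.mul_apply, h2, hcoe, h3, h4, Pi.one_apply, Function.const_apply]
      have hnx0 : 0 ≤ (n x) ω := by rw [h7] at h6; exact h6
      have : |C⁻¹| = C⁻¹ := abs_of_pos (inv_pos.mpr hC)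
      rw [this]
      calc C⁻¹ * (n x) ω ≤ C⁻¹ * C :=
            mul_le_mul_of_nonneg_left h5 (inv_nonneg.mpr hC.le)
        _ = 1 := inv_mul_cancel₀ hC.ne'
    have hsm := (hf k).2.2.1 ξ x
    filter_upwards [hfle k (ξ • x) hnle, AEEqFun.coeFn_mul (ξ : Ω →ₘ[μ] ℝ) (f k x),
      AEEqFun.coeFn_const (α := Ω) (μ := μ) (C⁻¹ : ℝ)] with ω ha hb hc
    rw [hsm, hb, Pi.mul_apply, hcoe, hc, Function.const_apply, abs_mul,
      abs_of_pos (inv_pos.mpr hC)] at ha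
    calc |f k x ω| = C * (C⁻¹ * |f k x ω|) := by field_simp
      _ ≤ C * 1 := mul_le_mul_of_nonneg_left ha hC.le
      _ = C := mul_one C
  -- the corresponding bound for the concatenation
  have hgbd : ∀ (x : E) (C : ℝ), 0 < C → (∀ᵐ ω ∂μ, (n x) ω ≤ C) →
      ∀ᵐ ω ∂μ, |(g x) ω| ≤ C := by
    intro x C hC hxC
    filter_upwards [hglue x, ae_all_iff.mpr (hkey x C hC hxC)] with ω h1 h2
    rw [h1 _ (pidx_mem P ω)]
    exact h2 _
  -- indicator compatibility
  have hind : ∀ (x : E) (k : ℕ), P.ind μ k * g x = P.ind μ k * f k x := by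
    intro x k
    apply AEEqFun.ext
    filter_upwards [AEEqFun.coeFn_mul (P.ind μ k) (g x),
      AEEqFun.coeFn_mul (P.ind μ k) (f k x),
      AEEqFun.coeFn_mk ((P.A k).indicator (1 : Ω → ℝ))
        ((measurable_const.indicator (P.meas k)).aestronglyMeasurable),
      hglue x] with ω h1 h2 h3 h4
    rw [h1, h2, Pi.mul_apply, Pi.mul_apply]
    have hcoe : (P.ind μ k) ω = (P.A k).indicator (1 : Ω → ℝ) ω := h3
    rw [hcoe]
    by_cases hk : ω ∈ P.A k
    · rw [h4 _ hk]
    · simp [Set.indicator_of_notMem hk]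
  -- boundedness in L^∞
  have hmem : ∀ x : E, g x ∈ Linf μ := by
    intro x
    obtain ⟨c, hc⟩ := hn.mem_Linf x
    refine ⟨|c| + 1, ?_⟩
    have hxC : ∀ᵐ ω ∂μ, (n x) ω ≤ |c| + 1 := by
      filter_upwards [hc] with ω h
      calc (n x) ω ≤ |(n x) ω| := le_abs_self _
        _ ≤ c := h
        _ ≤ |c| + 1 := by linarith [le_abs_self c]
    exact hgbd x (|c| + 1) (by positivity) hxC
  -- additivity
  have hadd : ∀ x y : E, g (x + y) = g x + g y := by
    intro x y
    apply AEEqFun.ext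
    filter_upwards [hglue (x + y), hglue x, hglue y, AEEqFun.coeFn_add (g x) (g y),
      ae_all_iff.mpr (fun k => AEEqFun.coeFn_add (f k x) (f k y))] with ω h1 h2 h3 h4 h5
    have hk := pidx_mem P ω
    calc g (x + y) ω = (f (pidx P ω) (x + y)) ω := h1 _ hk
      _ = (f (pidx P ω) x + f (pidx P ω) y) ω := by rw [(hf _).2.1]
      _ = (f (pidx P ω) x) ω + (f (pidx P ω) y) ω := by rw [h5 _]; rfl
      _ = g x ω + g y ω := by rw [h2 _ hk, h3 _ hk]
      _ = (g x + g y) ω := by rw [h4]; rfl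
  -- L^∞-homogeneity
  have hsmul : ∀ (ξ : Linf μ) (x : E), g (ξ • x) = (ξ : Ω →ₘ[μ] ℝ) * g x := by
    intro ξ x
    apply AEEqFun.ext
    filter_upwards [hglue (ξ • x), hglue x, AEEqFun.coeFn_mul (ξ : Ω →ₘ[μ] ℝ) (g x),
      ae_all_iff.mpr (fun k => AEEqFun.coeFn_mul (ξ : Ω →ₘ[μ] ℝ) (f k x))] with ω h1 h2 h3 h4
    have hk := pidx_mem P ω
    calc g (ξ • x) ω = (f (pidx P ω) (ξ • x)) ω := h1 _ hk
      _ = ((ξ : Ω →ₘ[μ] ℝ) * f (pidx P ω) x) ω := by rw [(hf _).2.2.1]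
      _ = (ξ : Ω →ₘ[μ] ℝ) ω * (f (pidx P ω) x) ω := by rw [h4 _]; rfl
      _ = (ξ : Ω →ₘ[μ] ℝ) ω * g x ω := by rw [h2 _ hk]
      _ = ((ξ : Ω →ₘ[μ] ℝ) * g x) ω := by rw [h3]; rfl
  -- the unit-ball property for g
  have hgball : ∀ x : E, n x ≤ 1 → |g x| ≤ 1 := by
    intro x hx
    rw [← AEEqFun.coeFn_le]
    filter_upwards [AEEqFun.coeFn_abs (g x), AEEqFun.coeFn_one (β := ℝ) (μ := μ),
      hglue x, ae_all_iff.mpr (fun k => hfle k x hx)] with ω h1 h2 h3 h4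
    rw [h1, h2, Pi.one_apply, h3 _ (pidx_mem P ω)]
    exact h4 _
  refine ⟨g, fun x k => hind x k, ⟨hmem, hadd, hsmul, ?_⟩, hgball⟩
  -- continuity
  haveI : (ae μ).NeBot := ae_neBot.mpr (IsProbabilityMeasure.ne_zero μ)
  intro ε hε
  refine ⟨ε, hε, fun x hx => ?_⟩
  obtain ⟨c, hc⟩ := hn.mem_Linf x
  have hbdd : Filter.IsBoundedUnder (· ≤ ·) (ae μ) (fun ω => |(n x) ω|) :=
    ⟨c, Filter.eventually_map.mpr hc⟩
  set C : ℝ := (max (NinfV μ (n x)) 0 + ε) / 2 with hCdef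
  have hC0 : 0 < C := by
    have := le_max_right (NinfV μ (n x)) 0
    have : (0:ℝ) ≤ max (NinfV μ (n x)) 0 := le_max_right _ _
    rw [hCdef]; linarith
  have hmaxlt : max (NinfV μ (n x)) 0 < ε := max_lt hx hε
  have hCε : C < ε := by rw [hCdef]; linarith
  have hnxC : ∀ᵐ ω ∂μ, (n x) ω ≤ C := by
    filter_upwards [ae_le_essSup hbdd] with ω h1
    have h2 : (n x) ω ≤ |(n x) ω| := le_abs_self _
    have h3 : NinfV μ (n x) ≤ max (NinfV μ (n x)) 0 := le_max_left _ _
    have h4 : |(n x) ω| ≤ NinfV μ (n x) := h1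
    rw [hCdef]; linarith
  have hgC := hgbd x C hC0 hnxC
  have hcob : Filter.IsCoboundedUnder (· ≤ ·) (ae μ) (fun ω => |(g x) ω|) :=
    Filter.isCoboundedUnder_le_of_le (ae μ) (x := 0) (fun ω => abs_nonneg _)
  have hle : NinfV μ (g x) ≤ C := Filter.limsup_le_of_le hcob hgC
  exact lt_of_le_of_lt hle hCε

end
end
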